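/- arXiv:1404.3645 — 5 statements merged into one kernel-verified Lean document; each statement's English description precedes it below -/
import Mathlib

section
/- (Sewing Lemma.) Let Ξ: Δ_T → R^d be continuous and suppose there exist a constant K > 0, a control function ω, and θ > 1 such that |Ξ_{s,t} − Ξ_{s,u} − Ξ_{u,t}| ≤ K ω(s,t)^θ for all 0 ≤ s ≤ u ≤ t ≤ T. Then there exists a unique function Φ: [0,T] → R^d with Φ(0) = 0 satisfying |Φ(t) − Φ(s) − Ξ_{s,t}| ≤ C(θ) ω(s,t)^θ for all (s,t) ∈ Δ_T, where C(θ) = K(1 − 2^{1−θ})^{−1}; moreover, for every (s,t) ∈ Δ_T, the Riemann-type sums Σ_{[u,v]∈π(s,t)} Ξ_{u,v} converge to Φ(t) − Φ(s) as the mesh of the partition π(s,t) of [s,t] tends to zero. -/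
open Finset Filter Topology

/-- A partition of `[a,b]` given by finitely many monotone grid points. -/
structure GridPartition (a b : ℝ) where
  n : ℕ
  t : Fin (n + 1) → ℝ
  mono : Monotone t
  first : t 0 = a
  last : t (Fin.last n) = b

namespace GridPartition

variable {a b : ℝ}

/-- The mesh of a partition: the largest interval length. -/
noncomputable def mesh (π : GridPartition a b) : ℝ :=
  ⨆ i : Fin π.n, (π.t i.succ - π.t i.castSucc)

/-- The Riemann-type sum `∑_{[s,t] ∈ π} F s t` over the intervals of a partition. -/
def rsum {E : Type*} [AddCommMonoid E] (π : GridPartition a b) (F : ℝ → ℝ → E) : E :=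
  ∑ i : Fin π.n, F (π.t i.castSucc) (π.t i.succ)

end GridPartition

/-- `RiemannLimit a b F L`: the Riemann-type sums of `F` over partitions of `[a,b]`
converge to `L` as the mesh tends to `0`. -/
def RiemannLimit {E : Type*} [SeminormedAddCommGroup E] (a b : ℝ) (F : ℝ → ℝ → E)
    (L : E) : Prop :=
  ∀ ε > 0, ∃ δ > 0, ∀ π : GridPartition a b, π.mesh < δ → ‖π.rsum F - L‖ < ε

/-- `X` has finite `p`-variation on `[a,b]` (boundedness of the partition sums). -/
def FinitePVar {E : Type*} [SeminormedAddCommGroup E] (p a b : ℝ) (X : ℝ → E) : Prop :=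
  ∃ M : ℝ, ∀ π : GridPartition a b,
    (∑ i : Fin π.n, ‖X (π.t i.succ) - X (π.t i.castSucc)‖ ^ p) ≤ M

/-- `X ∈ 𝒱^p([a,b])`: continuous and of finite `p`-variation. -/
def MemVp {E : Type*} [SeminormedAddCommGroup E] (p a b : ℝ) (X : ℝ → E) : Prop :=
  ContinuousOn X (Set.Icc a b) ∧ FinitePVar p a b X

/-- Finite `r`-variation for a two-parameter (remainder) function. -/
def FiniteRVar2 {E : Type*} [SeminormedAddCommGroup E] (r a b : ℝ) (R : ℝ → ℝ → E) : Prop :=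
  ∃ M : ℝ, ∀ π : GridPartition a b,
    (∑ i : Fin π.n, ‖R (π.t i.castSucc) (π.t i.succ)‖ ^ r) ≤ M

/-- Euclidean inner product on `Fin d → ℝ`. -/
def dot {d : ℕ} (x y : Fin d → ℝ) : ℝ := ∑ i, x i * y i

/-- Matrix-vector multiplication. -/
def mulVec' {d : ℕ} (M : Fin d → Fin d → ℝ) (v : Fin d → ℝ) : Fin d → ℝ :=
  fun i => ∑ j, M i j * v j

/-- `Y` is controlled by `X` with Gubinelli derivative `Y'` (vector case). -/
def Controlled {d : ℕ} (q r a b : ℝ) (X Y : ℝ → Fin d → ℝ)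
    (Y' : ℝ → Fin d → Fin d → ℝ) : Prop :=
  MemVp q a b Y' ∧
    FiniteRVar2 r a b (fun s t => Y t - Y s - mulVec' (Y' s) (X t - X s))

/-- `Y` is controlled by `X` with Gubinelli derivative `Y'` (scalar case). -/
def Controlled1 (q r a b : ℝ) (X Y Y' : ℝ → ℝ) : Prop :=
  MemVp q a b Y' ∧
    FiniteRVar2 r a b (fun s t => Y t - Y s - Y' s * (X t - X s))

/-- A control function on the simplex `Δ_T`. -/
def IsControlFun (T : ℝ) (ω : ℝ → ℝ → ℝ) : Prop :=
  ContinuousOn (fun z : ℝ × ℝ => ω z.1 z.2)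
      {z : ℝ × ℝ | 0 ≤ z.1 ∧ z.1 ≤ z.2 ∧ z.2 ≤ T} ∧
    (∀ s ∈ Set.Icc (0 : ℝ) T, ω s s = 0) ∧
    (∀ s t : ℝ, 0 ≤ s → s ≤ t → t ≤ T → 0 ≤ ω s t) ∧
    (∀ s u t : ℝ, 0 ≤ s → s ≤ u → u ≤ t → t ≤ T → ω s u + ω u t ≤ ω s t)

/-- An increasing (refining) sequence of partitions with mesh tending to zero. -/
def IncreasingSeq {T : ℝ} (π : ℕ → GridPartition 0 T) : Prop :=
  (∀ n, Set.range (π n).t ⊆ Set.range (π (n + 1)).t) ∧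
    Tendsto (fun n => (π n).mesh) atTop (𝓝 0)

/-- `f` has quadratic variation `Q` along the partition sequence `π` in the sense
of Föllmer. -/
def HasQV {T : ℝ} (π : ℕ → GridPartition 0 T) (f : ℝ → ℝ) (Q : ℝ → ℝ) : Prop :=
  ContinuousOn Q (Set.Icc 0 T) ∧
    ∀ u ∈ Set.Icc (0 : ℝ) T,
      Tendsto (fun n => ∑ i : Fin (π n).n,
          (f (min ((π n).t i.succ) u) - f (min ((π n).t i.castSucc) u)) ^ 2)
        atTop (𝓝 (Q u))



namespace SewingAux

open Finset Filter Topology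

variable {d : ℕ} {T K θ : ℝ} {Ξ : ℝ → ℝ → Fin d → ℝ} {ω : ℝ → ℝ → ℝ}

def gsum (Ξ : ℝ → ℝ → Fin d → ℝ) (p : ℕ → ℝ) (n : ℕ) : Fin d → ℝ :=
  ∑ i ∈ Finset.range n, Ξ (p i) (p (i + 1))

def cat (p q : ℕ → ℝ) (n : ℕ) : ℕ → ℝ := fun k => if k ≤ n then p k else q (k - n)

noncomputable def midpt (ω : ℝ → ℝ → ℝ) (u v : ℝ) : ℝ :=
  sSup {x | x ∈ Set.Icc u v ∧ ω u x ≤ ω u v / 2}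

noncomputable def bgrid (ω : ℝ → ℝ → ℝ) : ℕ → ℝ → ℝ → ℕ → ℝ
  | 0, u, v => fun k => if k = 0 then u else v
  | (n+1), u, v => cat (bgrid ω n u (midpt ω u v)) (bgrid ω n (midpt ω u v) v) (2 ^ n)

noncomputable def If (ω : ℝ → ℝ → ℝ) (Ξ : ℝ → ℝ → Fin d → ℝ) (u v : ℝ) : Fin d → ℝ :=
  limUnder atTop (fun n => gsum Ξ (bgrid ω n u v) (2 ^ n))

lemma omega_nonneg (hω : IsControlFun T ω) {a b : ℝ} (h0 : 0 ≤ a) (hab : a ≤ b) (hbT : b ≤ T) :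
    0 ≤ ω a b := hω.2.2.1 a b h0 hab hbT

lemma omega_mono (hω : IsControlFun T ω) {s s' t' t : ℝ} (h0 : 0 ≤ s) (h1 : s ≤ s')
    (h2 : s' ≤ t') (h3 : t' ≤ t) (h4 : t ≤ T) : ω s' t' ≤ ω s t := by
  obtain ⟨-, -, hnn, hsup⟩ := hω
  have e1 := hsup s s' t h0 h1 (h2.trans h3) h4
  have e2 := hsup s' t' t (h0.trans h1) h2 h3 h4
  have n1 := hnn s s' h0 h1 ((h2.trans h3).trans h4)
  have n2 := hnn t' t (h0.trans (h1.trans h2)) h3 h4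
  linarith

lemma xi_diag (hK : 0 < K) (hθ : 1 < θ) (hω : IsControlFun T ω)
    (hbound : ∀ s u t : ℝ, 0 ≤ s → s ≤ u → u ≤ t → t ≤ T →
      ‖Ξ s t - Ξ s u - Ξ u t‖ ≤ K * ω s t ^ θ)
    {x : ℝ} (h0 : 0 ≤ x) (hx : x ≤ T) : Ξ x x = 0 := by
  have h := hbound x x x h0 le_rfl le_rfl hx
  rw [hω.2.1 x ⟨h0, hx⟩, Real.zero_rpow (by positivity), mul_zero] at h
  have : Ξ x x - Ξ x x - Ξ x x = -Ξ x x := by abel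
  rw [this, norm_neg] at h
  exact norm_le_zero_iff.mp h

lemma cat_monotone {p q : ℕ → ℝ} {n : ℕ} (hp : Monotone p) (hq : Monotone q)
    (h : p n = q 0) : Monotone (cat p q n) := by
  intro k l hkl
  unfold cat
  split_ifs with h1 h2 h2
  · exact hp hkl
  · exact le_trans (hp h1) (h ▸ hq (Nat.zero_le _))
  · omega
  · exact hq (by omega)

lemma cat_eval_ge {p q : ℕ → ℝ} {n k : ℕ} (h : p n = q 0) (hk : n ≤ k) :
    cat p q n k = q (k - n) := by
  unfold cat
  split_ifs with h1
  · have : k = n := le_antisymm h1 hk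
    subst this; simpa using h
  · rfl

lemma gsum_cat {p q : ℕ → ℝ} {n m : ℕ} (h : p n = q 0) :
    gsum Ξ (cat p q n) (n + m) = gsum Ξ p n + gsum Ξ q m := by
  unfold gsum
  rw [← Finset.sum_range_add_sum_Ico _ (Nat.le_add_right n m)]
  congr 1
  · refine Finset.sum_congr rfl fun i hi => ?_
    rw [mem_range] at hi
    have h1 : cat p q n i = p i := if_pos hi.le
    have h2 : cat p q n (i + 1) = p (i + 1) := if_pos hi
    rw [h1, h2]
  · rw [Finset.sum_Ico_eq_sum_range]
    have hm : n + m - n = m := by omega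
    rw [hm]
    refine Finset.sum_congr rfl fun j _ => ?_
    have e1 : cat p q n (n + j) = q j := by
      rw [cat_eval_ge h (Nat.le_add_right n j)]; congr 1; omega
    have e2 : cat p q n (n + j + 1) = q (j + 1) := by
      rw [cat_eval_ge h (by omega)]; congr 1; omega
    rw [e1, e2]

lemma chain_sum (hω : IsControlFun T ω) {p : ℕ → ℝ} (hp : Monotone p) {n : ℕ}
    (h0 : 0 ≤ p 0) (hn : p n ≤ T) :
    ∑ i ∈ Finset.range n, ω (p i) (p (i + 1)) ≤ ω (p 0) (p n) := by
  induction n with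
  | zero => simp [hω.2.1 (p 0) ⟨h0, hn⟩]
  | succ n IH =>
    rw [Finset.sum_range_succ]
    have hn' : p n ≤ T := (hp (Nat.le_succ n)).trans hn
    have := hω.2.2.2 (p 0) (p n) (p (n + 1)) h0 (hp (Nat.zero_le n)) (hp (Nat.le_succ n)) hn
    linarith [IH hn']

lemma rpow_interp (hθ : 1 < θ) {x η : ℝ} (hx : 0 ≤ x) (hxη : x ≤ η) :
    x ^ θ ≤ η ^ (θ - 1) * x := by
  rcases eq_or_lt_of_le hx with h | h
  · rw [← h, Real.zero_rpow (by positivity), mul_zero]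
  · have e : x ^ θ = x ^ (θ - 1) * x := by
      rw [← Real.rpow_add_one (ne_of_gt h) (θ - 1)]
      ring_nf
    rw [e]
    exact mul_le_mul_of_nonneg_right
      (Real.rpow_le_rpow hx hxη (by linarith)) hx

lemma eta_choice (hθ : 1 < θ) {A : ℝ} (hA : 0 < A) :
    ∃ η > 0, η ^ (θ - 1) ≤ A := by
  refine ⟨A ^ (1 / (θ - 1)), Real.rpow_pos_of_pos hA _, ?_⟩
  rw [← Real.rpow_mul hA.le, one_div_mul_cancel (by linarith : θ - 1 ≠ 0), Real.rpow_one]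

lemma two_rpow_eq (hθ : 1 < θ) : (2 : ℝ) ^ (1 - θ) = 2 / 2 ^ θ := by
  rw [Real.rpow_sub two_pos, Real.rpow_one]

lemma geo_aux (hθ : 1 < θ) : ∀ (n : ℕ) (x : ℝ), 0 ≤ x →
    ((2 : ℝ) ^ n) * (x / 2 ^ n) ^ θ = x ^ θ * ((2 : ℝ) ^ (1 - θ)) ^ n := by
  intro n
  induction n with
  | zero => intro x hx; simp
  | succ n IH =>
    intro x hx
    have h2 : (x / 2 ^ (n + 1)) = (x / 2) / 2 ^ n := by ring
    have h2pos : (0:ℝ) < 2 ^ θ := Real.rpow_pos_of_pos two_pos θ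
    calc ((2:ℝ) ^ (n+1)) * (x / 2 ^ (n+1)) ^ θ
        = 2 * ((2 ^ n) * ((x/2) / 2 ^ n) ^ θ) := by rw [h2, pow_succ]; ring
      _ = 2 * ((x/2) ^ θ * ((2:ℝ) ^ (1 - θ)) ^ n) := by rw [IH (x/2) (by positivity)]
      _ = 2 * (x ^ θ / 2 ^ θ * ((2:ℝ) ^ (1 - θ)) ^ n) := by
          rw [Real.div_rpow hx (by norm_num)]
      _ = x ^ θ * ((2:ℝ) ^ (1 - θ)) ^ (n + 1) := by
          rw [pow_succ, two_rpow_eq hθ]; field_simp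

lemma omega_unif (hω : IsControlFun T ω) :
    ∀ ε > 0, ∃ δ > 0, ∀ a b : ℝ, 0 ≤ a → a ≤ b → b ≤ T → b - a < δ → ω a b < ε := by
  obtain ⟨hc, hdiag, hnn, -⟩ := hω
  intro ε hε
  set S : Set (ℝ × ℝ) := {z : ℝ × ℝ | 0 ≤ z.1 ∧ z.1 ≤ z.2 ∧ z.2 ≤ T} with hSdef
  have hclosed : IsClosed S := by
    have h1 : IsClosed {z : ℝ × ℝ | 0 ≤ z.1} := isClosed_le continuous_const continuous_fst
    have h2 : IsClosed {z : ℝ × ℝ | z.1 ≤ z.2} := isClosed_le continuous_fst continuous_snd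
    have h3 : IsClosed {z : ℝ × ℝ | z.2 ≤ T} := isClosed_le continuous_snd continuous_const
    exact h1.inter (h2.inter h3)
  have hsub : S ⊆ Set.Icc ((0:ℝ), (0:ℝ)) (T, T) := by
    rintro ⟨a, b⟩ ⟨ha, hab, hbT⟩
    constructor
    · exact ⟨ha, ha.trans hab⟩
    · exact ⟨hab.trans hbT, hbT⟩
  have hcomp : IsCompact S := IsCompact.of_isClosed_subset isCompact_Icc hclosed hsub
  have huc : UniformContinuousOn (fun z : ℝ × ℝ => ω z.1 z.2) S :=
    hcomp.uniformContinuousOn_of_continuous hc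
  rw [Metric.uniformContinuousOn_iff] at huc
  obtain ⟨δ, hδ, H⟩ := huc ε hε
  refine ⟨δ, hδ, fun a b h0 hab hbT hd => ?_⟩
  have hm1 : ((a, b) : ℝ × ℝ) ∈ S := ⟨h0, hab, hbT⟩
  have hm2 : ((a, a) : ℝ × ℝ) ∈ S := ⟨h0, le_refl a, hab.trans hbT⟩
  have hdist : dist ((a, b) : ℝ × ℝ) ((a, a) : ℝ × ℝ) < δ := by
    rw [Prod.dist_eq]
    simp only [dist_self]
    rw [Real.dist_eq, abs_of_nonneg (sub_nonneg.mpr hab)]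
    exact max_lt hδ hd
  have := H _ hm1 _ hm2 hdist
  simp only [Real.dist_eq] at this
  rw [hdiag a ⟨h0, hab.trans hbT⟩, sub_zero,
    abs_of_nonneg (hnn a b h0 hab hbT)] at this
  exact this

lemma midpt_spec (hω : IsControlFun T ω) {u v : ℝ} (h0 : 0 ≤ u) (huv : u ≤ v) (hvT : v ≤ T) :
    u ≤ midpt ω u v ∧ midpt ω u v ≤ v ∧ ω u (midpt ω u v) ≤ ω u v / 2 ∧
      ω (midpt ω u v) v ≤ ω u v / 2 := by
  obtain ⟨hc, hdiag, hnn, hsup⟩ := hω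
  have huT : u ≤ T := huv.trans hvT
  have hhalf : 0 ≤ ω u v / 2 := by
    have := hnn u v h0 huv hvT; linarith
  set S : Set ℝ := {x | x ∈ Set.Icc u v ∧ ω u x ≤ ω u v / 2} with hSdef
  have hune : u ∈ S := ⟨⟨le_refl u, huv⟩, by rw [hdiag u ⟨h0, huT⟩]; exact hhalf⟩
  have hbdd : BddAbove S := ⟨v, fun x hx => hx.1.2⟩
  have hcont1 : ContinuousOn (fun x => ω u x) (Set.Icc u v) := by
    have hmap : ContinuousOn (fun x : ℝ => ((u, x) : ℝ × ℝ)) (Set.Icc u v) :=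
      (continuous_const.prodMk continuous_id).continuousOn
    exact hc.comp hmap (fun x hx => ⟨h0, hx.1, hx.2.trans hvT⟩)
  have hSclosed : IsClosed S := by
    have : S = Set.Icc u v ∩ (fun x => ω u x) ⁻¹' Set.Iic (ω u v / 2) := rfl
    rw [this]
    exact hcont1.preimage_isClosed_of_isClosed isClosed_Icc isClosed_Iic
  have hScomp : IsCompact S :=
    IsCompact.of_isClosed_subset isCompact_Icc hSclosed (fun x hx => hx.1)
  have hmem : midpt ω u v ∈ S := hScomp.sSup_mem ⟨u, hune⟩
  set m := midpt ω u v
  have hum : u ≤ m := hmem.1.1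
  have hmv : m ≤ v := hmem.1.2
  refine ⟨hum, hmv, hmem.2, ?_⟩
  rcases eq_or_lt_of_le hmv with heq | hlt
  · rw [heq, hdiag v ⟨h0.trans (huv.trans (le_refl v)), hvT⟩]
    exact hhalf
  · have hgt : ∀ x ∈ Set.Ioc m v, ω x v ≤ ω u v / 2 := by
      intro x hx
      have hux : u ≤ x := hum.trans hx.1.le
      have hxS : x ∉ S := fun hxS => (not_le.mpr hx.1) (le_csSup hbdd hxS)
      have hx1 : ω u v / 2 < ω u x := by
        by_contra hle
        exact hxS ⟨⟨hux, hx.2⟩, le_of_not_gt hle⟩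
      have := hsup u x v h0 hux hx.2 hvT
      linarith
    have hcont2 : ContinuousOn (fun x => ω x v) (Set.Icc u v) := by
      have hmap : ContinuousOn (fun x : ℝ => ((x, v) : ℝ × ℝ)) (Set.Icc u v) :=
        (continuous_id.prodMk continuous_const).continuousOn
      exact hc.comp hmap (fun x hx => ⟨h0.trans hx.1, hx.2, hvT⟩)
    have hcwa : ContinuousWithinAt (fun x => ω x v) (Set.Ioc m v) m := by
      refine (hcont2.continuousWithinAt ⟨hum, hmv⟩).mono ?_
      intro x hx; exact ⟨hum.trans hx.1.le, hx.2⟩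
    have hne : (𝓝[Set.Ioc m v] m).NeBot := left_nhdsWithin_Ioc_neBot hlt
    exact le_of_tendsto hcwa ((eventually_mem_nhdsWithin).mono hgt)

lemma two_pow_succ_nat (n : ℕ) : 2 ^ (n + 1) = 2 ^ n + 2 ^ n := by
  rw [pow_succ, Nat.mul_two]

lemma bgrid_props (hω : IsControlFun T ω) :
    ∀ (n : ℕ) (u v : ℝ), 0 ≤ u → u ≤ v → v ≤ T →
      Monotone (bgrid ω n u v) ∧ bgrid ω n u v 0 = u ∧
      (∀ k, 2 ^ n ≤ k → bgrid ω n u v k = v) ∧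
      (∀ k, ω (bgrid ω n u v k) (bgrid ω n u v (k + 1)) ≤ ω u v / 2 ^ n) := by
  intro n
  induction n with
  | zero =>
    intro u v h0 huv hvT
    refine ⟨?_, by simp [bgrid], ?_, ?_⟩
    · intro k l hkl
      simp only [bgrid]
      split_ifs with h1 h2 h2
      · exact le_refl u
      · exact huv
      · omega
      · exact le_refl v
    · intro k hk
      have : k ≠ 0 := by omega
      simp [bgrid, this]
    · intro k
      rcases Nat.eq_zero_or_pos k with rfl | hk
      · simp only [bgrid]
        norm_num
      · have h1 : k ≠ 0 := by omega
        have h2 : k + 1 ≠ 0 := by omega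
        simp only [bgrid, if_neg h1, if_neg h2]
        rw [hω.2.1 v ⟨h0.trans huv, hvT⟩]
        have := omega_nonneg hω h0 huv hvT
        positivity
  | succ n IH =>
    intro u v h0 huv hvT
    obtain ⟨hum, hmv, hw1, hw2⟩ := midpt_spec hω h0 huv hvT
    have hmT : midpt ω u v ≤ T := hmv.trans hvT
    obtain ⟨mono1, zero1, last1, int1⟩ := IH u (midpt ω u v) h0 hum hmT
    obtain ⟨mono2, zero2, last2, int2⟩ := IH (midpt ω u v) v (h0.trans hum) hmv hvT
    have hpq : bgrid ω n u (midpt ω u v) (2 ^ n) = bgrid ω n (midpt ω u v) v 0 := by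
      rw [last1 _ (le_refl _), zero2]
    have hcat : bgrid ω (n + 1) u v =
        cat (bgrid ω n u (midpt ω u v)) (bgrid ω n (midpt ω u v) v) (2 ^ n) := rfl
    have h2n : (0:ℝ) < 2 ^ n := by positivity
    have hps : (2:ℝ) ^ (n + 1) = 2 ^ n * 2 := by rw [pow_succ]
    refine ⟨?_, ?_, ?_, ?_⟩
    · rw [hcat]; exact cat_monotone mono1 mono2 hpq
    · rw [hcat]
      show (if (0:ℕ) ≤ 2 ^ n then bgrid ω n u (midpt ω u v) 0 else _) = u
      rw [if_pos (Nat.zero_le _), zero1]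
    · intro k hk
      have h21 : (2:ℕ) ^ n ≤ 2 ^ (n + 1) := Nat.pow_le_pow_right (by norm_num) (Nat.le_succ n)
      have hk' : 2 ^ n ≤ k := le_trans h21 hk
      rw [hcat, cat_eval_ge hpq hk']
      apply last2
      have h : (2:ℕ) ^ n + 2 ^ n ≤ k := by
        calc (2:ℕ) ^ n + 2 ^ n = 2 ^ (n+1) := (two_pow_succ_nat n).symm
          _ ≤ k := hk
      omega
    · intro k
      by_cases hk : k + 1 ≤ 2 ^ n
      · have e1 : bgrid ω (n+1) u v k = bgrid ω n u (midpt ω u v) k := by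
          rw [hcat]; exact if_pos (by omega)
        have e2 : bgrid ω (n+1) u v (k+1) = bgrid ω n u (midpt ω u v) (k+1) := by
          rw [hcat]; exact if_pos hk
        rw [e1, e2]
        calc ω (bgrid ω n u (midpt ω u v) k) (bgrid ω n u (midpt ω u v) (k+1))
            ≤ ω u (midpt ω u v) / 2 ^ n := int1 k
          _ ≤ (ω u v / 2) / 2 ^ n := by gcongr
          _ = ω u v / 2 ^ (n+1) := by rw [hps]; ring
      · have hk1 : 2 ^ n ≤ k := by omega
        have e1 : bgrid ω (n+1) u v k = bgrid ω n (midpt ω u v) v (k - 2 ^ n) := by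
          rw [hcat]; exact cat_eval_ge hpq hk1
        have e2 : bgrid ω (n+1) u v (k+1) = bgrid ω n (midpt ω u v) v ((k - 2 ^ n) + 1) := by
          rw [hcat, cat_eval_ge hpq (by omega)]; congr 1; omega
        rw [e1, e2]
        calc ω (bgrid ω n (midpt ω u v) v (k - 2^n)) (bgrid ω n (midpt ω u v) v ((k - 2^n)+1))
            ≤ ω (midpt ω u v) v / 2 ^ n := int2 _
          _ ≤ (ω u v / 2) / 2 ^ n := by gcongr
          _ = ω u v / 2 ^ (n+1) := by rw [hps]; ring

lemma bgrid_mem (hω : IsControlFun T ω) {n : ℕ} {u v : ℝ}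
    (h0 : 0 ≤ u) (huv : u ≤ v) (hvT : v ≤ T) (k : ℕ) :
    u ≤ bgrid ω n u v k ∧ bgrid ω n u v k ≤ v := by
  obtain ⟨mono, zero, last, -⟩ := bgrid_props hω n u v h0 huv hvT
  constructor
  · calc u = bgrid ω n u v 0 := zero.symm
      _ ≤ bgrid ω n u v k := mono (Nat.zero_le k)
  · calc bgrid ω n u v k ≤ bgrid ω n u v (max k (2 ^ n)) := mono (le_max_left _ _)
      _ = v := last _ (le_max_right _ _)

lemma D_zero (u v : ℝ) : gsum Ξ (bgrid ω 0 u v) (2 ^ 0) = Ξ u v := by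
  show gsum Ξ (bgrid ω 0 u v) 1 = Ξ u v
  simp [gsum, bgrid]

lemma D_succ (hω : IsControlFun T ω) {u v : ℝ} (h0 : 0 ≤ u) (huv : u ≤ v) (hvT : v ≤ T)
    (n : ℕ) :
    gsum Ξ (bgrid ω (n + 1) u v) (2 ^ (n + 1)) =
      gsum Ξ (bgrid ω n u (midpt ω u v)) (2 ^ n) +
      gsum Ξ (bgrid ω n (midpt ω u v) v) (2 ^ n) := by
  obtain ⟨hum, hmv, hw1, hw2⟩ := midpt_spec hω h0 huv hvT
  have hmT : midpt ω u v ≤ T := hmv.trans hvT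
  obtain ⟨mono1, zero1, last1, int1⟩ := bgrid_props hω n u (midpt ω u v) h0 hum hmT
  obtain ⟨mono2, zero2, last2, int2⟩ := bgrid_props hω n (midpt ω u v) v (h0.trans hum) hmv hvT
  have hpq : bgrid ω n u (midpt ω u v) (2 ^ n) = bgrid ω n (midpt ω u v) v 0 := by
    rw [last1 _ (le_refl _), zero2]
  show gsum Ξ (cat (bgrid ω n u (midpt ω u v)) (bgrid ω n (midpt ω u v) v) (2 ^ n))
      (2 ^ (n+1)) = _
  rw [two_pow_succ_nat, gsum_cat hpq]

lemma D_diff (hK : 0 < K) (hθ : 1 < θ) (hω : IsControlFun T ω)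
    (hbound : ∀ s u t : ℝ, 0 ≤ s → s ≤ u → u ≤ t → t ≤ T →
      ‖Ξ s t - Ξ s u - Ξ u t‖ ≤ K * ω s t ^ θ) :
    ∀ (n : ℕ) (u v : ℝ), 0 ≤ u → u ≤ v → v ≤ T →
      ‖gsum Ξ (bgrid ω (n + 1) u v) (2 ^ (n + 1)) - gsum Ξ (bgrid ω n u v) (2 ^ n)‖ ≤
        K * ω u v ^ θ * (2 ^ (1 - θ)) ^ n := by
  intro n
  induction n with
  | zero =>
    intro u v h0 huv hvT
    obtain ⟨hum, hmv, hw1, hw2⟩ := midpt_spec hω h0 huv hvT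
    rw [D_succ hω h0 huv hvT 0, D_zero, D_zero, D_zero, pow_zero, mul_one]
    have h := hbound u (midpt ω u v) v h0 hum hmv hvT
    calc ‖Ξ u (midpt ω u v) + Ξ (midpt ω u v) v - Ξ u v‖
        = ‖Ξ u v - Ξ u (midpt ω u v) - Ξ (midpt ω u v) v‖ := by
          rw [← norm_neg]; congr 1; abel
      _ ≤ K * ω u v ^ θ := h
  | succ n IH =>
    intro u v h0 huv hvT
    obtain ⟨hum, hmv, hw1, hw2⟩ := midpt_spec hω h0 huv hvT
    have hmT : midpt ω u v ≤ T := hmv.trans hvT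
    set m := midpt ω u v
    have hIH1 := IH u m h0 hum hmT
    have hIH2 := IH m v (h0.trans hum) hmv hvT
    have hsplit1 := D_succ (Ξ := Ξ) hω h0 huv hvT (n + 1)
    have hsplit2 := D_succ (Ξ := Ξ) hω h0 huv hvT n
    rw [hsplit1, hsplit2]
    have tri : ‖(gsum Ξ (bgrid ω (n+1) u m) (2^(n+1)) + gsum Ξ (bgrid ω (n+1) m v) (2^(n+1))) -
        (gsum Ξ (bgrid ω n u m) (2^n) + gsum Ξ (bgrid ω n m v) (2^n))‖ ≤
        ‖gsum Ξ (bgrid ω (n+1) u m) (2^(n+1)) - gsum Ξ (bgrid ω n u m) (2^n)‖ +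
        ‖gsum Ξ (bgrid ω (n+1) m v) (2^(n+1)) - gsum Ξ (bgrid ω n m v) (2^n)‖ := by
      have : (gsum Ξ (bgrid ω (n+1) u m) (2^(n+1)) + gsum Ξ (bgrid ω (n+1) m v) (2^(n+1))) -
          (gsum Ξ (bgrid ω n u m) (2^n) + gsum Ξ (bgrid ω n m v) (2^n)) =
          (gsum Ξ (bgrid ω (n+1) u m) (2^(n+1)) - gsum Ξ (bgrid ω n u m) (2^n)) +
          (gsum Ξ (bgrid ω (n+1) m v) (2^(n+1)) - gsum Ξ (bgrid ω n m v) (2^n)) := by abel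
      rw [this]
      exact norm_add_le _ _
    refine tri.trans ?_
    have hr : (0:ℝ) ≤ (2 : ℝ) ^ (1 - θ) := le_of_lt (Real.rpow_pos_of_pos two_pos _)
    have hrn : (0:ℝ) ≤ ((2 : ℝ) ^ (1 - θ)) ^ n := pow_nonneg hr n
    have hωm : 0 ≤ ω u v := omega_nonneg hω h0 huv hvT
    have b1 : ω u m ^ θ ≤ (ω u v / 2) ^ θ :=
      Real.rpow_le_rpow (omega_nonneg hω h0 hum hmT) hw1 (by linarith)
    have b2 : ω m v ^ θ ≤ (ω u v / 2) ^ θ :=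
      Real.rpow_le_rpow (omega_nonneg hω (h0.trans hum) hmv hvT) hw2 (by linarith)
    have hdiv : (ω u v / 2) ^ θ = ω u v ^ θ / 2 ^ θ := Real.div_rpow hωm (by norm_num : (0:ℝ) ≤ 2) θ
    have h2θ : (0:ℝ) < 2 ^ θ := Real.rpow_pos_of_pos two_pos θ
    calc ‖gsum Ξ (bgrid ω (n+1) u m) (2^(n+1)) - gsum Ξ (bgrid ω n u m) (2^n)‖ +
        ‖gsum Ξ (bgrid ω (n+1) m v) (2^(n+1)) - gsum Ξ (bgrid ω n m v) (2^n)‖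
        ≤ K * ω u m ^ θ * ((2:ℝ) ^ (1-θ)) ^ n + K * ω m v ^ θ * ((2:ℝ) ^ (1-θ)) ^ n := by
          exact add_le_add hIH1 hIH2
      _ ≤ K * (ω u v / 2) ^ θ * ((2:ℝ) ^ (1-θ)) ^ n +
          K * (ω u v / 2) ^ θ * ((2:ℝ) ^ (1-θ)) ^ n := by
          have := hK.le
          exact add_le_add (by gcongr) (by gcongr)
      _ = K * ω u v ^ θ * ((2:ℝ) ^ (1-θ)) ^ (n+1) := by
          rw [hdiv, pow_succ, two_rpow_eq hθ]
          field_simp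
          ring

lemma lemT (hK : 0 < K) (hθ : 1 < θ) (hω : IsControlFun T ω)
    (hbound : ∀ s u t : ℝ, 0 ≤ s → s ≤ u → u ≤ t → t ≤ T →
      ‖Ξ s t - Ξ s u - Ξ u t‖ ≤ K * ω s t ^ θ)
    {p : ℕ → ℝ} (hp : Monotone p) (n : ℕ) (h0 : 0 ≤ p 0) (hn : p n ≤ T) :
    ‖gsum Ξ p n - Ξ (p 0) (p n)‖ ≤ K * ∑ i ∈ Finset.range n, ω (p 0) (p (i + 1)) ^ θ := by
  induction n with
  | zero => simp [gsum, xi_diag hK hθ hω hbound h0 hn]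
  | succ n IH =>
    have hn' : p n ≤ T := (hp (Nat.le_succ n)).trans hn
    have IH' := IH hn'
    have hsplit : gsum Ξ p (n+1) = gsum Ξ p n + Ξ (p n) (p (n+1)) := by
      unfold gsum; rw [Finset.sum_range_succ]
    have hb := hbound (p 0) (p n) (p (n+1)) h0 (hp (Nat.zero_le n)) (hp (Nat.le_succ n)) hn
    calc ‖gsum Ξ p (n+1) - Ξ (p 0) (p (n+1))‖
        = ‖(gsum Ξ p n - Ξ (p 0) (p n)) -
            (Ξ (p 0) (p (n+1)) - Ξ (p 0) (p n) - Ξ (p n) (p (n+1)))‖ := by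
          rw [hsplit]; congr 1; abel
      _ ≤ ‖gsum Ξ p n - Ξ (p 0) (p n)‖ +
            ‖Ξ (p 0) (p (n+1)) - Ξ (p 0) (p n) - Ξ (p n) (p (n+1))‖ := norm_sub_le _ _
      _ ≤ K * (∑ i ∈ Finset.range n, ω (p 0) (p (i+1)) ^ θ) + K * ω (p 0) (p (n+1)) ^ θ :=
          add_le_add IH' hb
      _ = K * ∑ i ∈ Finset.range (n+1), ω (p 0) (p (i+1)) ^ θ := by
          rw [Finset.sum_range_succ]; ring

lemma lemA (hK : 0 < K) (hθ : 1 < θ) (hω : IsControlFun T ω)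
    (hbound : ∀ s u t : ℝ, 0 ≤ s → s ≤ u → u ≤ t → t ≤ T →
      ‖Ξ s t - Ξ s u - Ξ u t‖ ≤ K * ω s t ^ θ) :
    ∀ (n : ℕ) (p : ℕ → ℝ), Monotone p → 0 ≤ p 0 → p n ≤ T →
      ‖gsum Ξ p n - Ξ (p 0) (p n)‖ ≤ 2 * K / (1 - 2 ^ (1 - θ)) * ω (p 0) (p n) ^ θ := by
  have hr1 : (2:ℝ) ^ (1 - θ) < 1 :=
    Real.rpow_lt_one_of_one_lt_of_neg one_lt_two (by linarith)
  have hr0 : (0:ℝ) < 2 ^ (1 - θ) := Real.rpow_pos_of_pos two_pos _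
  have hC2 : 0 < 2 * K / (1 - 2 ^ (1 - θ)) := div_pos (by linarith) (by linarith)
  intro n
  induction n using Nat.strong_induction_on with
  | _ n IH =>
  intro p hp h0 hnT
  rcases n with _ | n
  · have hg : gsum Ξ p 0 = 0 := by simp [gsum]
    rw [hg, xi_diag hK hθ hω hbound h0 hnT, sub_zero, norm_zero]
    exact mul_nonneg hC2.le (Real.rpow_nonneg (omega_nonneg hω h0 le_rfl hnT) θ)
  rcases n with _ | n
  · have hg : gsum Ξ p 1 = Ξ (p 0) (p 1) := by simp [gsum]
    rw [hg, sub_self, norm_zero]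
    exact mul_nonneg hC2.le
      (Real.rpow_nonneg (omega_nonneg hω h0 (hp (Nat.zero_le 1)) hnT) θ)
  set N := n + 2 with hN
  have hmem : ∀ i, i ≤ N → 0 ≤ p i ∧ p i ≤ T := by
    intro i hi; exact ⟨h0.trans (hp (Nat.zero_le i)), (hp hi).trans hnT⟩
  set W := ω (p 0) (p N) with hW
  have hWnn : 0 ≤ W := omega_nonneg hω h0 (hp (Nat.zero_le N)) hnT
  rcases eq_or_lt_of_le hWnn with hW0 | hWpos
  · have hsum := lemT hK hθ hω hbound hp N h0 hnT
    have hz : ∑ i ∈ Finset.range N, ω (p 0) (p (i+1)) ^ θ = 0 := by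
      refine Finset.sum_eq_zero fun i hi => ?_
      rw [Finset.mem_range] at hi
      have hiN : i + 1 ≤ N := by omega
      have h1 : ω (p 0) (p (i+1)) ≤ W :=
        omega_mono hω h0 le_rfl (hp (Nat.zero_le _)) (hp hiN) hnT
      have h2 : 0 ≤ ω (p 0) (p (i+1)) :=
        omega_nonneg hω h0 (hp (Nat.zero_le _)) ((hp hiN).trans hnT)
      have : ω (p 0) (p (i+1)) = 0 := le_antisymm (by linarith) h2
      rw [this, Real.zero_rpow (by positivity)]
    rw [hz, mul_zero] at hsum
    exact hsum.trans (mul_nonneg hC2.le (Real.rpow_nonneg hWnn θ))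
  · set S := (Finset.range (N + 1)).filter (fun j => ω (p 0) (p j) ≤ W / 2) with hS
    have h0S : 0 ∈ S := by
      rw [hS, Finset.mem_filter]
      refine ⟨Finset.mem_range.mpr (by omega), ?_⟩
      rw [hω.2.1 (p 0) ⟨h0, (hmem 0 (by omega)).2⟩]
      linarith
    have hSne : S.Nonempty := ⟨0, h0S⟩
    set j := S.max' hSne with hj
    have hjS : j ∈ S := S.max'_mem hSne
    have hjN : j ≤ N := by
      have := (Finset.mem_filter.mp hjS).1
      rw [Finset.mem_range] at this; omega
    have hjW : ω (p 0) (p j) ≤ W / 2 := (Finset.mem_filter.mp hjS).2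
    have hjne : j ≠ N := by
      intro h; rw [h, ← hW] at hjW; linarith
    have hjN' : j + 1 ≤ N := by omega
    have hj1 : W / 2 < ω (p 0) (p (j+1)) := by
      by_contra hcon
      push_neg at hcon
      have hmem1 : j + 1 ∈ S := Finset.mem_filter.mpr ⟨Finset.mem_range.mpr (by omega), hcon⟩
      have := S.le_max' _ hmem1
      omega
    have hsup := hω.2.2.2 (p 0) (p (j+1)) (p N) h0 (hp (Nat.zero_le _)) (hp hjN') hnT
    have hj1v : ω (p (j+1)) (p N) ≤ W / 2 := by rw [← hW] at hsup; linarith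
    -- split the sum
    set q : ℕ → ℝ := fun i => p (j + 1 + i) with hq
    set M := N - (j + 1) with hM
    have hqM : q M = p N := by
      show p (j + 1 + M) = p N; congr 1; omega
    have hq0 : q 0 = p (j + 1) := by show p (j+1+0) = p (j+1); congr 1
    have hqmono : Monotone q := fun i i' hii => hp (by omega)
    have hsplit : gsum Ξ p N = gsum Ξ p j + Ξ (p j) (p (j+1)) + gsum Ξ q M := by
      unfold gsum
      rw [← Finset.sum_range_add_sum_Ico _ (hjN : j ≤ N),
        Finset.sum_eq_sum_Ico_succ_bot (by omega : j < N),
        Finset.sum_Ico_eq_sum_range]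
      have hMM : N - (j + 1) = M := rfl
      rw [hMM, add_assoc]
      simp only [hq]
      rfl
    have IH1 := IH j (by omega) p hp h0 (hmem j hjN).2
    have IH2' := IH M (by omega) q hqmono (by rw [hq0]; exact (hmem _ hjN').1)
      (by rw [hqM]; exact hnT)
    rw [hq0, hqM] at IH2'
    -- rpow bounds
    have hWhalf : (0:ℝ) ≤ W / 2 := by linarith
    have b1 : ω (p 0) (p j) ^ θ ≤ (W / 2) ^ θ :=
      Real.rpow_le_rpow (omega_nonneg hω h0 (hp (Nat.zero_le j)) (hmem j hjN).2) hjW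
        (by linarith)
    have b2 : ω (p (j+1)) (p N) ^ θ ≤ (W / 2) ^ θ :=
      Real.rpow_le_rpow (omega_nonneg hω (hmem _ hjN').1 (hp (by omega)) hnT) hj1v
        (by linarith)
    have b3 : ω (p j) (p N) ^ θ ≤ W ^ θ :=
      Real.rpow_le_rpow (omega_nonneg hω (hmem j hjN).1 (hp hjN) hnT)
        (omega_mono hω h0 (hp (Nat.zero_le j)) (hp hjN) le_rfl hnT) (by linarith)
    have hb1 := hbound (p 0) (p j) (p N) h0 (hp (Nat.zero_le j)) (hp hjN) hnT
    have hb2 := hbound (p j) (p (j+1)) (p N) (hmem j hjN).1 (hp (Nat.le_succ j)) (hp hjN') hnT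
    -- assemble
    have hdecomp : gsum Ξ p N - Ξ (p 0) (p N) =
        (gsum Ξ p j - Ξ (p 0) (p j)) + (gsum Ξ q M - Ξ (p (j+1)) (p N)) +
        (-(Ξ (p 0) (p N) - Ξ (p 0) (p j) - Ξ (p j) (p N))) +
        (-(Ξ (p j) (p N) - Ξ (p j) (p (j+1)) - Ξ (p (j+1)) (p N))) := by
      rw [hsplit]; abel
    have hnorm : ‖gsum Ξ p N - Ξ (p 0) (p N)‖ ≤
        ‖gsum Ξ p j - Ξ (p 0) (p j)‖ + ‖gsum Ξ q M - Ξ (p (j+1)) (p N)‖ +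
        ‖Ξ (p 0) (p N) - Ξ (p 0) (p j) - Ξ (p j) (p N)‖ +
        ‖Ξ (p j) (p N) - Ξ (p j) (p (j+1)) - Ξ (p (j+1)) (p N)‖ := by
      rw [hdecomp]
      refine (norm_add_le _ _).trans (add_le_add (le_trans (norm_add_le _ _)
        (add_le_add (norm_add_le _ _) le_rfl)) le_rfl) |>.trans ?_
      simp only [norm_neg, le_refl]
    have hdiv : (W / 2) ^ θ = W ^ θ / 2 ^ θ := Real.div_rpow hWnn (by norm_num : (0:ℝ) ≤ 2) θ
    have h2θ : (0:ℝ) < 2 ^ θ := Real.rpow_pos_of_pos two_pos θ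
    have hWr : (W / 2) ^ θ = W ^ θ * (2 ^ (1-θ)) / 2 := by
      rw [hdiv, two_rpow_eq hθ]; field_simp
    have hfin : 2 * K / (1 - 2 ^ (1-θ)) * (W/2) ^ θ + 2 * K / (1 - 2 ^ (1-θ)) * (W/2) ^ θ +
        K * W ^ θ + K * W ^ θ = 2 * K / (1 - 2 ^ (1-θ)) * W ^ θ := by
      rw [hWr]
      have hne : 1 - (2:ℝ) ^ (1-θ) ≠ 0 := ne_of_gt (by linarith)
      field_simp
      ring
    calc ‖gsum Ξ p N - Ξ (p 0) (p N)‖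
        ≤ ‖gsum Ξ p j - Ξ (p 0) (p j)‖ + ‖gsum Ξ q M - Ξ (p (j+1)) (p N)‖ +
          ‖Ξ (p 0) (p N) - Ξ (p 0) (p j) - Ξ (p j) (p N)‖ +
          ‖Ξ (p j) (p N) - Ξ (p j) (p (j+1)) - Ξ (p (j+1)) (p N)‖ := hnorm
      _ ≤ 2 * K / (1 - 2 ^ (1-θ)) * (W/2) ^ θ + 2 * K / (1 - 2 ^ (1-θ)) * (W/2) ^ θ +
          K * W ^ θ + K * W ^ θ := by
          refine add_le_add (add_le_add (add_le_add ?_ ?_) ?_) ?_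
          · exact IH1.trans (mul_le_mul_of_nonneg_left b1 hC2.le)
          · exact IH2'.trans (mul_le_mul_of_nonneg_left b2 hC2.le)
          · exact hb1
          · exact hb2.trans (mul_le_mul_of_nonneg_left b3 hK.le)
      _ = 2 * K / (1 - 2 ^ (1-θ)) * W ^ θ := hfin

lemma lemR (hK : 0 < K) (hθ : 1 < θ) (hω : IsControlFun T ω)
    (hbound : ∀ s u t : ℝ, 0 ≤ s → s ≤ u → u ≤ t → t ≤ T →
      ‖Ξ s t - Ξ s u - Ξ u t‖ ≤ K * ω s t ^ θ)
    (p q : ℕ → ℝ) (hp : Monotone p) (hq : Monotone q)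
    (a : ℕ → ℕ) (hamono : Monotone a) (ha0 : a 0 = 0) (h0 : 0 ≤ p 0) :
    ∀ n : ℕ, (∀ i ≤ n, q (a i) = p i) → p n ≤ T →
      ‖gsum Ξ q (a n) - gsum Ξ p n‖ ≤
        2 * K / (1 - 2 ^ (1 - θ)) * ∑ i ∈ Finset.range n, ω (p i) (p (i + 1)) ^ θ := by
  intro n
  induction n with
  | zero =>
    intro ha hnT
    rw [ha0]
    have e1 : gsum Ξ q 0 = 0 := by simp [gsum]
    have e2 : gsum Ξ p 0 = 0 := by simp [gsum]
    rw [e1, e2]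
    simp
  | succ n IHn =>
    intro ha hnT
    have hpn : p n ≤ T := (hp (Nat.le_succ n)).trans hnT
    have IH := IHn (fun i hi => ha i (by omega)) hpn
    have hmono_a : a n ≤ a (n + 1) := hamono (Nat.le_succ n)
    have hsplit : gsum Ξ q (a (n+1)) = gsum Ξ q (a n) +
        ∑ i ∈ Finset.Ico (a n) (a (n+1)), Ξ (q i) (q (i+1)) := by
      unfold gsum; rw [← Finset.sum_range_add_sum_Ico _ hmono_a]
    set q' : ℕ → ℝ := fun i => q (a n + i) with hq'
    set M := a (n+1) - a n with hM
    have hblock : ∑ i ∈ Finset.Ico (a n) (a (n+1)), Ξ (q i) (q (i+1)) = gsum Ξ q' M := by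
      rw [Finset.sum_Ico_eq_sum_range]
      unfold gsum
      simp only [hq']
      rfl
    have hq'0 : q' 0 = p n := by
      show q (a n + 0) = p n
      rw [Nat.add_zero]; exact ha n (by omega)
    have hq'M : q' M = p (n+1) := by
      show q (a n + M) = p (n+1)
      have e : a n + M = a (n+1) := by omega
      rw [e]; exact ha (n+1) le_rfl
    have hq'mono : Monotone q' := fun i i' hii => hq (by omega)
    have hA := lemA hK hθ hω hbound M q' hq'mono
      (by rw [hq'0]; exact h0.trans (hp (Nat.zero_le n))) (by rw [hq'M]; exact hnT)
    rw [hq'0, hq'M] at hA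
    have hps : gsum Ξ p (n+1) = gsum Ξ p n + Ξ (p n) (p (n+1)) := by
      unfold gsum; rw [Finset.sum_range_succ]
    calc ‖gsum Ξ q (a (n+1)) - gsum Ξ p (n+1)‖
        = ‖(gsum Ξ q (a n) - gsum Ξ p n) + (gsum Ξ q' M - Ξ (p n) (p (n+1)))‖ := by
          rw [hsplit, hblock, hps]; congr 1; abel
      _ ≤ ‖gsum Ξ q (a n) - gsum Ξ p n‖ + ‖gsum Ξ q' M - Ξ (p n) (p (n+1))‖ := norm_add_le _ _
      _ ≤ 2 * K / (1 - 2 ^ (1 - θ)) * (∑ i ∈ Finset.range n, ω (p i) (p (i + 1)) ^ θ) +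
          2 * K / (1 - 2 ^ (1 - θ)) * ω (p n) (p (n+1)) ^ θ := add_le_add IH hA
      _ = 2 * K / (1 - 2 ^ (1 - θ)) * ∑ i ∈ Finset.range (n+1), ω (p i) (p (i + 1)) ^ θ := by
          rw [Finset.sum_range_succ]; ring

lemma lemCmp (hK : 0 < K) (hθ : 1 < θ) (hω : IsControlFun T ω)
    (hbound : ∀ s u t : ℝ, 0 ≤ s → s ≤ u → u ≤ t → t ≤ T →
      ‖Ξ s t - Ξ s u - Ξ u t‖ ≤ K * ω s t ^ θ)
    (p q : ℕ → ℝ) (n m : ℕ) (hp : Monotone p) (hq : Monotone q)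
    (h00 : p 0 = q 0) (hnm : p n = q m) (h0 : 0 ≤ p 0) (hT' : p n ≤ T) :
    ‖gsum Ξ p n - gsum Ξ q m‖ ≤ 2 * K / (1 - 2 ^ (1 - θ)) *
      ((∑ i ∈ Finset.range n, ω (p i) (p (i + 1)) ^ θ) +
        ∑ i ∈ Finset.range m, ω (q i) (q (i + 1)) ^ θ) := by
  classical
  set Sf : Finset ℝ := ((Finset.range (n+1)).image p) ∪ ((Finset.range (m+1)).image q) with hSf
  have hpmem : ∀ i, i ≤ n → p i ∈ Sf := fun i hi =>
    Finset.mem_union_left _ (Finset.mem_image_of_mem p (Finset.mem_range.mpr (by omega)))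
  have hqmem : ∀ i, i ≤ m → q i ∈ Sf := fun i hi =>
    Finset.mem_union_right _ (Finset.mem_image_of_mem q (Finset.mem_range.mpr (by omega)))
  have hlb : ∀ x ∈ Sf, p 0 ≤ x := by
    intro x hx
    rcases Finset.mem_union.mp hx with hx | hx
    · obtain ⟨i, hi, rfl⟩ := Finset.mem_image.mp hx
      exact hp (Nat.zero_le i)
    · obtain ⟨i, hi, rfl⟩ := Finset.mem_image.mp hx
      rw [h00]; exact hq (Nat.zero_le i)
  have hub : ∀ x ∈ Sf, x ≤ p n := by
    intro x hx
    rcases Finset.mem_union.mp hx with hx | hx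
    · obtain ⟨i, hi, rfl⟩ := Finset.mem_image.mp hx
      rw [Finset.mem_range] at hi
      exact hp (by omega)
    · obtain ⟨i, hi, rfl⟩ := Finset.mem_image.mp hx
      rw [Finset.mem_range] at hi
      rw [hnm]; exact hq (by omega)
  obtain ⟨c, hc⟩ : ∃ c, Sf.card = c + 1 :=
    ⟨Sf.card - 1, (Nat.succ_pred_eq_of_pos
      (Finset.card_pos.mpr ⟨p 0, hpmem 0 (Nat.zero_le n)⟩)).symm⟩
  set iso := Sf.orderIsoOfFin hc with hiso
  set w : ℕ → ℝ := fun k => if h : k < c + 1 then (iso ⟨k, h⟩ : ℝ) else p n with hw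
  have hwmono : Monotone w := by
    intro k l hkl
    by_cases hk : k < c + 1
    · by_cases hl : l < c + 1
      · simp only [hw, dif_pos hk, dif_pos hl]
        exact Subtype.coe_le_coe.mpr (iso.monotone (by exact Fin.mk_le_mk.mpr hkl))
      · simp only [hw, dif_pos hk, dif_neg hl]
        exact hub _ (iso ⟨k, hk⟩).2
    · have hl : ¬ l < c + 1 := by omega
      simp only [hw, dif_neg hk, dif_neg hl]
      exact le_rfl
  have hsymm_le : ∀ (x : ℝ) (hx : x ∈ Sf), (∀ y ∈ Sf, x ≤ y) →
      iso.symm ⟨x, hx⟩ = (0 : Fin (c+1)) := by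
    intro x hx hmin
    refine le_antisymm ?_ (Fin.zero_le _)
    have h1 : iso.symm ⟨x, hx⟩ ≤ iso.symm (iso 0) := by
      exact iso.symm.monotone (Subtype.mk_le_mk.mpr (hmin _ (iso 0).2))
    rwa [iso.symm_apply_apply] at h1
  have hsymm_ge : ∀ (x : ℝ) (hx : x ∈ Sf), (∀ y ∈ Sf, y ≤ x) →
      iso.symm ⟨x, hx⟩ = Fin.last c := by
    intro x hx hmax
    refine le_antisymm (Fin.le_last _) ?_
    have h1 : iso.symm (iso (Fin.last c)) ≤ iso.symm ⟨x, hx⟩ :=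
      iso.symm.monotone (Subtype.mk_le_mk.mpr (hmax _ (iso (Fin.last c)).2))
    rwa [iso.symm_apply_apply] at h1
  set av : ℕ → ℕ := fun i => if h : i ≤ n then (iso.symm ⟨p i, hpmem i h⟩ : Fin (c+1)).val else c
    with hav
  set bv : ℕ → ℕ := fun j => if h : j ≤ m then (iso.symm ⟨q j, hqmem j h⟩ : Fin (c+1)).val else c
    with hbv
  have havmono : Monotone av := by
    intro i j hij
    by_cases hi : i ≤ n
    · by_cases hj : j ≤ n
      · simp only [hav, dif_pos hi, dif_pos hj]
        exact iso.symm.monotone (Subtype.mk_le_mk.mpr (hp hij))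
      · simp only [hav, dif_pos hi, dif_neg hj]
        exact Fin.is_le _
    · have hj : ¬ j ≤ n := by omega
      simp only [hav, dif_neg hi, dif_neg hj]; exact le_rfl
  have hbvmono : Monotone bv := by
    intro i j hij
    by_cases hi : i ≤ m
    · by_cases hj : j ≤ m
      · simp only [hbv, dif_pos hi, dif_pos hj]
        exact iso.symm.monotone (Subtype.mk_le_mk.mpr (hq hij))
      · simp only [hbv, dif_pos hi, dif_neg hj]
        exact Fin.is_le _
    · have hj : ¬ j ≤ m := by omega
      simp only [hbv, dif_neg hi, dif_neg hj]; exact le_rfl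
  have hav0 : av 0 = 0 := by
    simp only [hav, dif_pos (Nat.zero_le n)]
    rw [hsymm_le (p 0) (hpmem 0 (Nat.zero_le n)) hlb]
    rfl
  have hbv0 : bv 0 = 0 := by
    simp only [hbv, dif_pos (Nat.zero_le m)]
    have e : (⟨q 0, hqmem 0 (Nat.zero_le m)⟩ : {x // x ∈ Sf}) = ⟨p 0, hpmem 0 (Nat.zero_le n)⟩ :=
      Subtype.ext h00.symm
    rw [e, hsymm_le (p 0) (hpmem 0 (Nat.zero_le n)) hlb]
    rfl
  have havn : av n = c := by
    simp only [hav, dif_pos (le_refl n)]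
    rw [hsymm_ge (p n) (hpmem n (le_refl n)) hub]
    rfl
  have hbvm : bv m = c := by
    simp only [hbv, dif_pos (le_refl m)]
    have e : (⟨q m, hqmem m (le_refl m)⟩ : {x // x ∈ Sf}) = ⟨p n, hpmem n (le_refl n)⟩ :=
      Subtype.ext hnm.symm
    rw [e, hsymm_ge (p n) (hpmem n (le_refl n)) hub]
    rfl
  have hwav : ∀ i ≤ n, w (av i) = p i := by
    intro i hi
    have hlt : av i < c + 1 := by
      simp only [hav, dif_pos hi]; exact (iso.symm ⟨p i, hpmem i hi⟩).isLt
    simp only [hw, dif_pos hlt]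
    have e : (⟨av i, hlt⟩ : Fin (c+1)) = iso.symm ⟨p i, hpmem i hi⟩ := by
      simp only [hav, dif_pos hi]
    rw [e, iso.apply_symm_apply]
  have hwbv : ∀ j ≤ m, w (bv j) = q j := by
    intro j hj
    have hlt : bv j < c + 1 := by
      simp only [hbv, dif_pos hj]; exact (iso.symm ⟨q j, hqmem j hj⟩).isLt
    simp only [hw, dif_pos hlt]
    have e : (⟨bv j, hlt⟩ : Fin (c+1)) = iso.symm ⟨q j, hqmem j hj⟩ := by
      simp only [hbv, dif_pos hj]
    rw [e, iso.apply_symm_apply]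
  have hRp := lemR hK hθ hω hbound p w hp hwmono av havmono hav0 h0 n hwav hT'
  have hRq := lemR hK hθ hω hbound q w hq hwmono bv hbvmono hbv0 (h00 ▸ h0) m hwbv
    (hnm ▸ hT')
  rw [havn] at hRp
  rw [hbvm] at hRq
  calc ‖gsum Ξ p n - gsum Ξ q m‖
      = ‖(gsum Ξ w c - gsum Ξ q m) - (gsum Ξ w c - gsum Ξ p n)‖ := by congr 1; abel
    _ ≤ ‖gsum Ξ w c - gsum Ξ q m‖ + ‖gsum Ξ w c - gsum Ξ p n‖ := norm_sub_le _ _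
    _ ≤ 2 * K / (1 - 2 ^ (1 - θ)) * (∑ i ∈ Finset.range m, ω (q i) (q (i + 1)) ^ θ) +
        2 * K / (1 - 2 ^ (1 - θ)) * (∑ i ∈ Finset.range n, ω (p i) (p (i + 1)) ^ θ) :=
        add_le_add hRq hRp
    _ = 2 * K / (1 - 2 ^ (1 - θ)) *
        ((∑ i ∈ Finset.range n, ω (p i) (p (i + 1)) ^ θ) +
          ∑ i ∈ Finset.range m, ω (q i) (q (i + 1)) ^ θ) := by ring

lemma I_tendsto (hK : 0 < K) (hθ : 1 < θ) (hω : IsControlFun T ω)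
    (hbound : ∀ s u t : ℝ, 0 ≤ s → s ≤ u → u ≤ t → t ≤ T →
      ‖Ξ s t - Ξ s u - Ξ u t‖ ≤ K * ω s t ^ θ)
    {u v : ℝ} (h0 : 0 ≤ u) (huv : u ≤ v) (hvT : v ≤ T) :
    Tendsto (fun n => gsum Ξ (bgrid ω n u v) (2 ^ n)) atTop (𝓝 (If ω Ξ u v)) := by
  have hr1 : (2:ℝ) ^ (1 - θ) < 1 :=
    Real.rpow_lt_one_of_one_lt_of_neg one_lt_two (by linarith)
  have hdist : ∀ n, dist (gsum Ξ (bgrid ω n u v) (2^n)) (gsum Ξ (bgrid ω (n+1) u v) (2^(n+1)))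
      ≤ (K * ω u v ^ θ) * ((2:ℝ) ^ (1-θ)) ^ n := by
    intro n
    rw [dist_eq_norm, norm_sub_rev]
    exact D_diff hK hθ hω hbound n u v h0 huv hvT
  have hcauchy : CauchySeq (fun n => gsum Ξ (bgrid ω n u v) (2 ^ n)) :=
    cauchySeq_of_le_geometric _ _ hr1 hdist
  obtain ⟨L, hL⟩ := cauchySeq_tendsto_of_complete hcauchy
  have : If ω Ξ u v = L := hL.limUnder_eq
  rw [this]; exact hL

lemma I_sub_xi (hK : 0 < K) (hθ : 1 < θ) (hω : IsControlFun T ω)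
    (hbound : ∀ s u t : ℝ, 0 ≤ s → s ≤ u → u ≤ t → t ≤ T →
      ‖Ξ s t - Ξ s u - Ξ u t‖ ≤ K * ω s t ^ θ)
    {u v : ℝ} (h0 : 0 ≤ u) (huv : u ≤ v) (hvT : v ≤ T) :
    ‖If ω Ξ u v - Ξ u v‖ ≤ K * (1 - 2 ^ (1 - θ))⁻¹ * ω u v ^ θ := by
  have hr1 : (2:ℝ) ^ (1 - θ) < 1 :=
    Real.rpow_lt_one_of_one_lt_of_neg one_lt_two (by linarith)
  have hdist : ∀ n, dist (gsum Ξ (bgrid ω n u v) (2^n)) (gsum Ξ (bgrid ω (n+1) u v) (2^(n+1)))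
      ≤ (K * ω u v ^ θ) * ((2:ℝ) ^ (1-θ)) ^ n := by
    intro n
    rw [dist_eq_norm, norm_sub_rev]
    exact D_diff hK hθ hω hbound n u v h0 huv hvT
  have hd := dist_le_of_le_geometric_of_tendsto₀ _ _ hr1 hdist
    (I_tendsto hK hθ hω hbound h0 huv hvT)
  rw [D_zero, dist_eq_norm, norm_sub_rev] at hd
  calc ‖If ω Ξ u v - Ξ u v‖ ≤ K * ω u v ^ θ / (1 - 2 ^ (1-θ)) := hd
    _ = K * (1 - 2 ^ (1 - θ))⁻¹ * ω u v ^ θ := by rw [div_eq_mul_inv]; ring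

lemma I_diag (hK : 0 < K) (hθ : 1 < θ) (hω : IsControlFun T ω)
    (hbound : ∀ s u t : ℝ, 0 ≤ s → s ≤ u → u ≤ t → t ≤ T →
      ‖Ξ s t - Ξ s u - Ξ u t‖ ≤ K * ω s t ^ θ)
    {x : ℝ} (h0 : 0 ≤ x) (hx : x ≤ T) : If ω Ξ x x = 0 := by
  have hconst : ∀ n, gsum Ξ (bgrid ω n x x) (2 ^ n) = 0 := by
    intro n
    refine Finset.sum_eq_zero fun k _ => ?_
    have e1 : bgrid ω n x x k = x :=
      le_antisymm (bgrid_mem hω h0 le_rfl hx k).2 (bgrid_mem hω h0 le_rfl hx k).1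
    have e2 : bgrid ω n x x (k+1) = x :=
      le_antisymm (bgrid_mem hω h0 le_rfl hx (k+1)).2 (bgrid_mem hω h0 le_rfl hx (k+1)).1
    rw [e1, e2, xi_diag hK hθ hω hbound h0 hx]
  unfold If
  have : (fun n => gsum Ξ (bgrid ω n x x) (2 ^ n)) = fun _ => (0 : Fin d → ℝ) :=
    funext hconst
  rw [this]
  exact tendsto_const_nhds.limUnder_eq

lemma ladd (hK : 0 < K) (hθ : 1 < θ) (hω : IsControlFun T ω)
    (hbound : ∀ s u t : ℝ, 0 ≤ s → s ≤ u → u ≤ t → t ≤ T →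
      ‖Ξ s t - Ξ s u - Ξ u t‖ ≤ K * ω s t ^ θ)
    {s u t : ℝ} (h0 : 0 ≤ s) (hsu : s ≤ u) (hut : u ≤ t) (htT : t ≤ T) :
    If ω Ξ s u + If ω Ξ u t = If ω Ξ s t := by
  have h0u : 0 ≤ u := h0.trans hsu
  have huT : u ≤ T := hut.trans htT
  have hst : s ≤ t := hsu.trans hut
  have hr1 : (2:ℝ) ^ (1 - θ) < 1 :=
    Real.rpow_lt_one_of_one_lt_of_neg one_lt_two (by linarith)
  have hr0 : (0:ℝ) ≤ 2 ^ (1 - θ) := (Real.rpow_pos_of_pos two_pos _).le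
  have hC2 : 0 < 2 * K / (1 - 2 ^ (1 - θ)) := div_pos (by linarith) (by linarith)
  have hWnn : 0 ≤ ω s t := omega_nonneg hω h0 hst htT
  have hbound_D : ∀ n, ‖(gsum Ξ (bgrid ω n s u) (2^n) + gsum Ξ (bgrid ω n u t) (2^n)) -
      gsum Ξ (bgrid ω n s t) (2^n)‖ ≤
      (2 * K / (1 - 2 ^ (1 - θ)) * (3 * ω s t ^ θ)) * ((2:ℝ) ^ (1-θ)) ^ n := by
    intro n
    obtain ⟨mono1, zero1, last1, int1⟩ := bgrid_props hω n s u h0 hsu huT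
    obtain ⟨mono2, zero2, last2, int2⟩ := bgrid_props hω n u t h0u hut htT
    obtain ⟨mono3, zero3, last3, int3⟩ := bgrid_props hω n s t h0 hst htT
    have hpq : bgrid ω n s u (2 ^ n) = bgrid ω n u t 0 := by
      rw [last1 _ (le_refl _), zero2]
    set g : ℕ → ℝ := cat (bgrid ω n s u) (bgrid ω n u t) (2 ^ n) with hg
    have hkey : gsum Ξ g (2^n + 2^n) =
        gsum Ξ (bgrid ω n s u) (2^n) + gsum Ξ (bgrid ω n u t) (2^n) := gsum_cat hpq
    have hgmono : Monotone g := cat_monotone mono1 mono2 hpq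
    have hg0 : g 0 = s := by
      show cat _ _ _ 0 = s
      unfold cat; rw [if_pos (Nat.zero_le _)]; exact zero1
    have hgend : g (2^n + 2^n) = t := by
      rw [hg, cat_eval_ge hpq (Nat.le_add_right _ _)]
      rw [Nat.add_sub_cancel]
      exact last2 _ le_rfl
    have hb30 : bgrid ω n s t 0 = s := zero3
    have hb3e : bgrid ω n s t (2^n) = t := last3 _ le_rfl
    have hgm : ∀ k, s ≤ g k ∧ g k ≤ t := by
      intro k
      by_cases hk : k ≤ 2 ^ n
      · have e : g k = bgrid ω n s u k := by rw [hg]; exact if_pos hk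
        rw [e]
        have m := bgrid_mem hω h0 hsu huT (n := n) k
        exact ⟨m.1, m.2.trans hut⟩
      · have e : g k = bgrid ω n u t (k - 2^n) := by rw [hg]; exact cat_eval_ge hpq (by omega)
        rw [e]
        have m := bgrid_mem hω h0u hut htT (n := n) (k - 2^n)
        exact ⟨hsu.trans m.1, m.2⟩
    have hgint : ∀ i, ω (g i) (g (i+1)) ≤ ω s t / 2 ^ n := by
      intro i
      by_cases hi : i + 1 ≤ 2 ^ n
      · have e1 : g i = bgrid ω n s u i := by rw [hg]; exact if_pos (by omega)
        have e2 : g (i+1) = bgrid ω n s u (i+1) := by rw [hg]; exact if_pos hi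
        rw [e1, e2]
        calc ω (bgrid ω n s u i) (bgrid ω n s u (i+1)) ≤ ω s u / 2 ^ n := int1 i
          _ ≤ ω s t / 2 ^ n := by
              gcongr
              exact omega_mono hω h0 le_rfl hsu hut htT
      · have hi1 : 2 ^ n ≤ i := by omega
        have e1 : g i = bgrid ω n u t (i - 2^n) := by rw [hg]; exact cat_eval_ge hpq hi1
        have e2 : g (i+1) = bgrid ω n u t ((i - 2^n) + 1) := by
          rw [hg, cat_eval_ge hpq (by omega)]; congr 1; omega
        rw [e1, e2]
        calc ω (bgrid ω n u t (i - 2^n)) (bgrid ω n u t ((i - 2^n)+1)) ≤ ω u t / 2 ^ n :=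
            int2 _
          _ ≤ ω s t / 2 ^ n := by
              gcongr
              exact omega_mono hω h0 hsu hut le_rfl htT
    have h2n : (0:ℝ) < 2 ^ n := by positivity
    set Q : ℝ := (ω s t / 2 ^ n) ^ θ with hQ
    have hgsumb : ∑ i ∈ Finset.range (2^n + 2^n), ω (g i) (g (i+1)) ^ θ ≤
        ((2^n + 2^n : ℕ) : ℝ) * Q := by
      have h := Finset.sum_le_card_nsmul (Finset.range (2^n + 2^n))
        (fun i => ω (g i) (g (i+1)) ^ θ) Q ?_
      · rwa [Finset.card_range, nsmul_eq_mul] at h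
      · intro i _
        refine Real.rpow_le_rpow ?_ (hgint i) (by linarith)
        exact omega_nonneg hω (h0.trans (hgm i).1) (hgmono (Nat.le_succ i))
          ((hgm (i+1)).2.trans htT)
    have h3memb := bgrid_mem hω h0 hst htT (n := n)
    have h3sumb : ∑ i ∈ Finset.range (2^n), ω (bgrid ω n s t i) (bgrid ω n s t (i+1)) ^ θ ≤
        ((2^n : ℕ) : ℝ) * Q := by
      have h := Finset.sum_le_card_nsmul (Finset.range (2^n))
        (fun i => ω (bgrid ω n s t i) (bgrid ω n s t (i+1)) ^ θ) Q ?_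
      · rwa [Finset.card_range, nsmul_eq_mul] at h
      · intro i _
        refine Real.rpow_le_rpow ?_ (int3 i) (by linarith)
        exact omega_nonneg hω (h0.trans (h3memb i).1) (mono3 (Nat.le_succ i))
          ((h3memb (i+1)).2.trans htT)
    have hcmp := lemCmp hK hθ hω hbound g (bgrid ω n s t) (2^n + 2^n) (2^n) hgmono mono3
      (by rw [hg0, hb30]) (by rw [hgend, hb3e]) (by rw [hg0]; exact h0)
      (by rw [hgend]; exact htT)
    have hgeo : ((2:ℝ) ^ n) * Q = ω s t ^ θ * ((2:ℝ) ^ (1-θ)) ^ n := geo_aux hθ n (ω s t) hWnn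
    calc ‖(gsum Ξ (bgrid ω n s u) (2^n) + gsum Ξ (bgrid ω n u t) (2^n)) -
        gsum Ξ (bgrid ω n s t) (2^n)‖
        = ‖gsum Ξ g (2^n + 2^n) - gsum Ξ (bgrid ω n s t) (2^n)‖ := by rw [hkey]
      _ ≤ 2 * K / (1 - 2 ^ (1 - θ)) *
          ((∑ i ∈ Finset.range (2^n + 2^n), ω (g i) (g (i+1)) ^ θ) +
            ∑ i ∈ Finset.range (2^n), ω (bgrid ω n s t i) (bgrid ω n s t (i+1)) ^ θ) := hcmp
      _ ≤ 2 * K / (1 - 2 ^ (1 - θ)) * (((2^n + 2^n : ℕ) : ℝ) * Q + ((2^n : ℕ) : ℝ) * Q) := by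
          gcongr
      _ = 2 * K / (1 - 2 ^ (1 - θ)) * (3 * (((2:ℝ) ^ n) * Q)) := by push_cast; ring
      _ = (2 * K / (1 - 2 ^ (1 - θ)) * (3 * ω s t ^ θ)) * ((2:ℝ) ^ (1-θ)) ^ n := by
          rw [hgeo]; ring
  have h1 := I_tendsto hK hθ hω hbound h0 hst htT
  have h2 := (I_tendsto hK hθ hω hbound h0 hsu huT).add (I_tendsto hK hθ hω hbound h0u hut htT)
  have h3 : Tendsto (fun n => (gsum Ξ (bgrid ω n s u) (2^n) + gsum Ξ (bgrid ω n u t) (2^n)) -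
      gsum Ξ (bgrid ω n s t) (2^n)) atTop (𝓝 0) := by
    refine squeeze_zero_norm hbound_D ?_
    have := (tendsto_pow_atTop_nhds_zero_of_lt_one hr0 hr1).const_mul
      (2 * K / (1 - 2 ^ (1 - θ)) * (3 * ω s t ^ θ))
    simpa using this
  have h4 := h2.sub h1
  have h5 := tendsto_nhds_unique h4 h3
  exact sub_eq_zero.mp h5

lemma I_tel (hK : 0 < K) (hθ : 1 < θ) (hω : IsControlFun T ω)
    (hbound : ∀ s u t : ℝ, 0 ≤ s → s ≤ u → u ≤ t → t ≤ T →
      ‖Ξ s t - Ξ s u - Ξ u t‖ ≤ K * ω s t ^ θ) :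
    ∀ (n : ℕ) (p : ℕ → ℝ), Monotone p → 0 ≤ p 0 → p n ≤ T →
      (∑ i ∈ Finset.range n, If ω Ξ (p i) (p (i + 1))) = If ω Ξ (p 0) (p n) := by
  intro n p hp h0 hnT
  induction n with
  | zero => simp [I_diag hK hθ hω hbound h0 hnT]
  | succ n IHn =>
    have hn' : p n ≤ T := (hp (Nat.le_succ n)).trans hnT
    rw [Finset.sum_range_succ, IHn hn']
    exact ladd hK hθ hω hbound h0 (hp (Nat.zero_le n)) (hp (Nat.le_succ n)) hnT

lemma rsum_eq_gsum (Ξ : ℝ → ℝ → Fin d → ℝ) {a b : ℝ} (π : GridPartition a b) :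
    π.rsum Ξ = gsum Ξ (fun i : ℕ => π.t ⟨min i π.n, Nat.lt_succ_of_le (Nat.min_le_right _ _)⟩)
      π.n := by
  unfold GridPartition.rsum gsum
  rw [← Fin.sum_univ_eq_sum_range
    (fun i : ℕ => Ξ (π.t ⟨min i π.n, Nat.lt_succ_of_le (Nat.min_le_right _ _)⟩)
      (π.t ⟨min (i+1) π.n, Nat.lt_succ_of_le (Nat.min_le_right _ _)⟩)) π.n]
  refine Finset.sum_congr rfl fun i _ => ?_
  have e1 : π.t i.castSucc = π.t ⟨min (i : ℕ) π.n, Nat.lt_succ_of_le (Nat.min_le_right _ _)⟩ := by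
    refine congr_arg π.t (Fin.ext ?_)
    have := i.isLt
    simp only [Fin.coe_castSucc]
    omega
  have e2 : π.t i.succ = π.t ⟨min ((i : ℕ) + 1) π.n, Nat.lt_succ_of_le (Nat.min_le_right _ _)⟩ := by
    refine congr_arg π.t (Fin.ext ?_)
    have := i.isLt
    simp only [Fin.val_succ]
    omega
  rw [e1, e2]

theorem main (T K θ : ℝ) (hT : 0 < T) (hK : 0 < K) (hθ : 1 < θ)
    (Ξ : ℝ → ℝ → Fin d → ℝ)
    (hΞcont : ContinuousOn (fun z : ℝ × ℝ => Ξ z.1 z.2)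
      {z : ℝ × ℝ | 0 ≤ z.1 ∧ z.1 ≤ z.2 ∧ z.2 ≤ T})
    (ω : ℝ → ℝ → ℝ) (hω : IsControlFun T ω)
    (hbound : ∀ s u t : ℝ, 0 ≤ s → s ≤ u → u ≤ t → t ≤ T →
      ‖Ξ s t - Ξ s u - Ξ u t‖ ≤ K * ω s t ^ θ) :
    ∃ Φ : ℝ → Fin d → ℝ,
      (Φ 0 = 0 ∧
        (∀ s t : ℝ, 0 ≤ s → s ≤ t → t ≤ T →
          ‖Φ t - Φ s - Ξ s t‖ ≤ K * (1 - 2 ^ (1 - θ))⁻¹ * ω s t ^ θ) ∧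
        (∀ s t : ℝ, 0 ≤ s → s ≤ t → t ≤ T → RiemannLimit s t Ξ (Φ t - Φ s))) ∧
      ∀ Ψ : ℝ → Fin d → ℝ,
        (Ψ 0 = 0 ∧
          ∀ s t : ℝ, 0 ≤ s → s ≤ t → t ≤ T →
            ‖Ψ t - Ψ s - Ξ s t‖ ≤ K * (1 - 2 ^ (1 - θ))⁻¹ * ω s t ^ θ) →
        ∀ t ∈ Set.Icc (0 : ℝ) T, Ψ t = Φ t := by
  classical
  have hr1 : (2:ℝ) ^ (1 - θ) < 1 :=
    Real.rpow_lt_one_of_one_lt_of_neg one_lt_two (by linarith)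
  have hr0 : (0:ℝ) < 2 ^ (1 - θ) := Real.rpow_pos_of_pos two_pos _
  set C : ℝ := K * (1 - 2 ^ (1 - θ))⁻¹ with hCdef
  have hCpos : 0 < C := mul_pos hK (inv_pos.mpr (by linarith))
  set Φ : ℝ → Fin d → ℝ := fun t => If ω Ξ 0 t with hΦdef
  have hΦ0 : Φ 0 = 0 := I_diag hK hθ hω hbound le_rfl hT.le
  have hkey : ∀ s t : ℝ, 0 ≤ s → s ≤ t → t ≤ T → Φ t - Φ s = If ω Ξ s t := by
    intro s t h0 hst htT
    have h := ladd hK hθ hω hbound le_rfl h0 hst htT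
    show If ω Ξ 0 t - If ω Ξ 0 s = If ω Ξ s t
    rw [← h]; abel
  have hbnd : ∀ s t : ℝ, 0 ≤ s → s ≤ t → t ≤ T →
      ‖Φ t - Φ s - Ξ s t‖ ≤ C * ω s t ^ θ := by
    intro s t h0 hst htT
    rw [hkey s t h0 hst htT]
    exact I_sub_xi hK hθ hω hbound h0 hst htT
  refine ⟨Φ, ⟨hΦ0, hbnd, ?_⟩, ?_⟩
  · -- Riemann limits
    intro s t h0 hst htT ε hε
    have hWnn : 0 ≤ ω s t := omega_nonneg hω h0 hst htT
    have hDpos : 0 < C * (ω s t + 1) := mul_pos hCpos (by linarith)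
    obtain ⟨η, hηpos, hηA⟩ := eta_choice hθ (div_pos hε hDpos)
    obtain ⟨δ, hδpos, hδ⟩ := omega_unif hω η hηpos
    refine ⟨δ, hδpos, fun π hmesh => ?_⟩
    set p : ℕ → ℝ := fun i => π.t ⟨min i π.n, Nat.lt_succ_of_le (Nat.min_le_right _ _)⟩
      with hpdef
    have hpmono : Monotone p := by
      intro i j hij
      exact π.mono (Fin.mk_le_mk.mpr (min_le_min hij le_rfl))
    have hp0 : p 0 = s := by
      have e : (⟨min 0 π.n, Nat.lt_succ_of_le (Nat.min_le_right _ _)⟩ : Fin (π.n+1)) = 0 :=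
        Fin.ext (by simp)
      exact (congr_arg π.t e).trans π.first
    have hpn : p π.n = t := by
      have e : (⟨min π.n π.n, Nat.lt_succ_of_le (Nat.min_le_right _ _)⟩ : Fin (π.n+1)) =
          Fin.last π.n := Fin.ext (by simp)
      exact (congr_arg π.t e).trans π.last
    have hpim : ∀ i, s ≤ p i ∧ p i ≤ t := by
      intro i
      constructor
      · rw [← hp0]; exact hpmono (Nat.zero_le i)
      · rw [← hpn]
        exact π.mono (Fin.mk_le_mk.mpr (by omega))
    have hΦst : Φ t - Φ s = If ω Ξ s t := hkey s t h0 hst htT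
    have htel2 : (∑ i ∈ Finset.range π.n, If ω Ξ (p i) (p (i+1))) = If ω Ξ s t := by
      rw [I_tel hK hθ hω hbound π.n p hpmono (by rw [hp0]; exact h0)
        (by rw [hpn]; exact htT), hp0, hpn]
    have hdiff : gsum Ξ p π.n - ∑ i ∈ Finset.range π.n, If ω Ξ (p i) (p (i+1)) =
        ∑ i ∈ Finset.range π.n, (Ξ (p i) (p (i+1)) - If ω Ξ (p i) (p (i+1))) := by
      unfold gsum; rw [Finset.sum_sub_distrib]
    rw [rsum_eq_gsum Ξ π, hΦst, ← hpdef, ← htel2, hdiff]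
    have hplen : ∀ i, i < π.n → p (i+1) - p i < δ := by
      intro i hi
      have hmeshdef : π.mesh = ⨆ i : Fin π.n, (π.t i.succ - π.t i.castSucc) := rfl
      have hle : π.t (⟨i, hi⟩ : Fin π.n).succ - π.t (⟨i, hi⟩ : Fin π.n).castSucc ≤ π.mesh := by
        rw [hmeshdef]
        exact le_ciSup (f := fun j : Fin π.n => π.t j.succ - π.t j.castSucc)
          (Set.Finite.bddAbove (Set.finite_range _)) (⟨i, hi⟩ : Fin π.n)
      have e1 : p (i+1) = π.t (⟨i, hi⟩ : Fin π.n).succ :=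
        congr_arg π.t (Fin.ext (by simp only [Fin.val_succ]; omega))
      have e2 : p i = π.t (⟨i, hi⟩ : Fin π.n).castSucc :=
        congr_arg π.t (Fin.ext (by simp only [Fin.coe_castSucc]; omega))
      rw [e1, e2]
      exact lt_of_le_of_lt hle hmesh
    have hterm : ∀ i ∈ Finset.range π.n,
        ‖Ξ (p i) (p (i+1)) - If ω Ξ (p i) (p (i+1))‖ ≤
          C * (η ^ (θ-1) * ω (p i) (p (i+1))) := by
      intro i hi
      rw [Finset.mem_range] at hi
      have h0i : 0 ≤ p i := h0.trans (hpim i).1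
      have hiT : p (i+1) ≤ T := (hpim (i+1)).2.trans htT
      have hωi : ω (p i) (p (i+1)) < η := hδ _ _ h0i (hpmono (Nat.le_succ i)) hiT (hplen i hi)
      have hωinn : 0 ≤ ω (p i) (p (i+1)) :=
        omega_nonneg hω h0i (hpmono (Nat.le_succ i)) hiT
      calc ‖Ξ (p i) (p (i+1)) - If ω Ξ (p i) (p (i+1))‖
          = ‖If ω Ξ (p i) (p (i+1)) - Ξ (p i) (p (i+1))‖ := norm_sub_rev _ _
        _ ≤ C * ω (p i) (p (i+1)) ^ θ :=
            I_sub_xi hK hθ hω hbound h0i (hpmono (Nat.le_succ i)) hiT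
        _ ≤ C * (η ^ (θ-1) * ω (p i) (p (i+1))) := by
            have := rpow_interp hθ hωinn hωi.le
            exact mul_le_mul_of_nonneg_left this hCpos.le
    have hchain : ∑ i ∈ Finset.range π.n, ω (p i) (p (i+1)) ≤ ω s t := by
      have := chain_sum hω hpmono (n := π.n) (by rw [hp0]; exact h0) (by rw [hpn]; exact htT)
      rwa [hp0, hpn] at this
    have hηnn : 0 ≤ η ^ (θ - 1) := Real.rpow_nonneg hηpos.le _
    calc ‖∑ i ∈ Finset.range π.n, (Ξ (p i) (p (i+1)) - If ω Ξ (p i) (p (i+1)))‖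
        ≤ ∑ i ∈ Finset.range π.n, ‖Ξ (p i) (p (i+1)) - If ω Ξ (p i) (p (i+1))‖ :=
          norm_sum_le _ _
      _ ≤ ∑ i ∈ Finset.range π.n, C * (η ^ (θ-1) * ω (p i) (p (i+1))) :=
          Finset.sum_le_sum hterm
      _ = C * η ^ (θ-1) * ∑ i ∈ Finset.range π.n, ω (p i) (p (i+1)) := by
          rw [Finset.mul_sum]
          refine Finset.sum_congr rfl fun i _ => by ring
      _ ≤ C * η ^ (θ-1) * ω s t := by
          refine mul_le_mul_of_nonneg_left hchain (by positivity)
      _ ≤ C * (ε / (C * (ω s t + 1))) * ω s t := by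
          refine mul_le_mul_of_nonneg_right (mul_le_mul_of_nonneg_left hηA hCpos.le) hWnn
      _ < ε := by
          rw [div_eq_mul_inv]
          have hlt : C * ω s t < C * (ω s t + 1) := by nlinarith
          calc C * (ε * (C * (ω s t + 1))⁻¹) * ω s t
              = ε * ((C * ω s t) / (C * (ω s t + 1))) := by ring
            _ < ε * 1 := by
                refine mul_lt_mul_of_pos_left ?_ hε
                rw [div_lt_one hDpos]
                exact hlt
            _ = ε := mul_one ε
  · -- uniqueness
    intro Ψ hΨ t ht
    obtain ⟨hΨ0, hΨb⟩ := hΨ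
    obtain ⟨ht0, htT⟩ := ht
    have hG : ∀ x y : ℝ, 0 ≤ x → x ≤ y → y ≤ T →
        ‖(Ψ y - Φ y) - (Ψ x - Φ x)‖ ≤ 2 * C * ω x y ^ θ := by
      intro x y hx hxy hyT
      have h1 := hΨb x y hx hxy hyT
      have h2 := hbnd x y hx hxy hyT
      calc ‖(Ψ y - Φ y) - (Ψ x - Φ x)‖
          = ‖(Ψ y - Ψ x - Ξ x y) - (Φ y - Φ x - Ξ x y)‖ := by congr 1; abel
        _ ≤ ‖Ψ y - Ψ x - Ξ x y‖ + ‖Φ y - Φ x - Ξ x y‖ := norm_sub_le _ _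
        _ ≤ C * ω x y ^ θ + C * ω x y ^ θ := add_le_add h1 h2
        _ = 2 * C * ω x y ^ θ := by ring
    have hle : ∀ ε > 0, ‖Ψ t - Φ t‖ ≤ ε := by
      intro ε hε
      rcases eq_or_lt_of_le ht0 with h | htpos
      · rw [← h, hΨ0, hΦ0, sub_zero, norm_zero]; exact hε.le
      have hWnn : 0 ≤ ω 0 t := omega_nonneg hω le_rfl ht0 htT
      have hDpos : 0 < 2 * C * (ω 0 t + 1) := by positivity
      obtain ⟨η, hηpos, hηA⟩ := eta_choice hθ (div_pos hε hDpos)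
      obtain ⟨δ, hδpos, hδ⟩ := omega_unif hω η hηpos
      obtain ⟨n, hn⟩ := exists_nat_gt (t / δ)
      have hnpos : (0:ℝ) < n := lt_trans (div_pos htpos hδpos) hn
      set p : ℕ → ℝ := fun i => ((min i n : ℕ) : ℝ) * t / n with hpdef
      have hpmono : Monotone p := by
        intro i j hij
        show ((min i n : ℕ) : ℝ) * t / n ≤ ((min j n : ℕ) : ℝ) * t / n
        have hc : ((min i n : ℕ) : ℝ) ≤ ((min j n : ℕ) : ℝ) :=
          Nat.cast_le.mpr (min_le_min hij le_rfl)
        have h1 : ((min i n : ℕ) : ℝ) * t ≤ ((min j n : ℕ) : ℝ) * t :=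
          mul_le_mul_of_nonneg_right hc htpos.le
        have hn' : (0:ℝ) ≤ (n:ℝ) := hnpos.le
        gcongr
      have hp0 : p 0 = 0 := by
        show ((min 0 n : ℕ) : ℝ) * t / n = 0
        simp
      have hpn : p n = t := by
        show ((min n n : ℕ) : ℝ) * t / n = t
        rw [min_self]
        field_simp
      have hpt : ∀ i, p i ≤ t := by
        intro i
        have hle : ((min i n : ℕ) : ℝ) ≤ (n : ℝ) := Nat.cast_le.mpr (Nat.min_le_right i n)
        calc p i = ((min i n : ℕ) : ℝ) * t / n := rfl
          _ ≤ (n : ℝ) * t / n := by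
              have h1 := mul_le_mul_of_nonneg_right hle htpos.le
              gcongr
          _ = t := by field_simp
      have hp0le : ∀ i, 0 ≤ p i := by
        intro i
        have e : p i = ((min i n : ℕ) : ℝ) * t / n := rfl
        rw [e]
        positivity
      have hplen : ∀ i, p (i+1) - p i < δ := by
        intro i
        have htn : t / n < δ := by
          rw [div_lt_iff₀ hnpos]
          have h := (div_lt_iff₀ hδpos).mp hn
          linarith
        have hminle : ((min (i+1) n : ℕ) : ℝ) ≤ ((min i n : ℕ) : ℝ) + 1 := by
          have : min (i+1) n ≤ min i n + 1 := by omega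
          exact_mod_cast this
        have hstep : p (i+1) - p i ≤ t / n := by
          have e1 : p (i+1) = ((min (i+1) n : ℕ) : ℝ) * t / n := rfl
          have e2 : p i = ((min i n : ℕ) : ℝ) * t / n := rfl
          rw [e1, e2]
          have expand : ((min (i+1) n : ℕ):ℝ) * t / n - ((min i n : ℕ):ℝ) * t / n =
              (((min (i+1) n : ℕ):ℝ) - ((min i n : ℕ):ℝ)) * (t / n) := by ring
          rw [expand]
          have h1 : (((min (i+1) n : ℕ):ℝ) - ((min i n : ℕ):ℝ)) ≤ 1 := by linarith
          have h2 : (0:ℝ) ≤ t / n := by positivity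
          calc (((min (i+1) n : ℕ):ℝ) - ((min i n : ℕ):ℝ)) * (t / n) ≤ 1 * (t/n) :=
              mul_le_mul_of_nonneg_right h1 h2
            _ = t / n := one_mul _
        linarith
      have htel : ∀ m : ℕ, ‖(Ψ (p m) - Φ (p m)) - (Ψ (p 0) - Φ (p 0))‖ ≤
          ∑ i ∈ Finset.range m, 2 * C * ω (p i) (p (i+1)) ^ θ := by
        intro m
        induction m with
        | zero => simp
        | succ m IH =>
          have step := hG (p m) (p (m+1)) (hp0le m) (hpmono (Nat.le_succ m))
            ((hpt (m+1)).trans htT)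
          calc ‖(Ψ (p (m+1)) - Φ (p (m+1))) - (Ψ (p 0) - Φ (p 0))‖
              = ‖((Ψ (p (m+1)) - Φ (p (m+1))) - (Ψ (p m) - Φ (p m))) +
                ((Ψ (p m) - Φ (p m)) - (Ψ (p 0) - Φ (p 0)))‖ := by congr 1; abel
            _ ≤ ‖(Ψ (p (m+1)) - Φ (p (m+1))) - (Ψ (p m) - Φ (p m))‖ +
                ‖(Ψ (p m) - Φ (p m)) - (Ψ (p 0) - Φ (p 0))‖ := norm_add_le _ _
            _ ≤ 2 * C * ω (p m) (p (m+1)) ^ θ +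
                ∑ i ∈ Finset.range m, 2 * C * ω (p i) (p (i+1)) ^ θ := add_le_add step IH
            _ = ∑ i ∈ Finset.range (m+1), 2 * C * ω (p i) (p (i+1)) ^ θ := by
                rw [Finset.sum_range_succ]; ring
      have hterm2 : ∀ i ∈ Finset.range n, 2 * C * ω (p i) (p (i+1)) ^ θ ≤
          2 * C * (η ^ (θ-1) * ω (p i) (p (i+1))) := by
        intro i _
        have hωi : ω (p i) (p (i+1)) < η := hδ _ _ (hp0le i) (hpmono (Nat.le_succ i))
          ((hpt (i+1)).trans htT) (hplen i)
        have hωinn : 0 ≤ ω (p i) (p (i+1)) :=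
          omega_nonneg hω (hp0le i) (hpmono (Nat.le_succ i)) ((hpt (i+1)).trans htT)
        exact mul_le_mul_of_nonneg_left (rpow_interp hθ hωinn hωi.le) (by positivity)
      have hchain : ∑ i ∈ Finset.range n, ω (p i) (p (i+1)) ≤ ω 0 t := by
        have h := chain_sum hω hpmono (n := n) (le_of_eq hp0.symm)
          (by rw [hpn]; exact htT)
        rwa [hp0, hpn] at h
      have final : ‖Ψ t - Φ t‖ ≤ 2 * C * η ^ (θ-1) * ω 0 t := by
        have h1 := htel n
        rw [hp0, hpn, hΨ0, hΦ0] at h1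
        simp only [sub_zero] at h1
        calc ‖Ψ t - Φ t‖ ≤ ∑ i ∈ Finset.range n, 2 * C * ω (p i) (p (i+1)) ^ θ := h1
          _ ≤ ∑ i ∈ Finset.range n, 2 * C * (η ^ (θ-1) * ω (p i) (p (i+1))) :=
              Finset.sum_le_sum hterm2
          _ = 2 * C * η ^ (θ-1) * ∑ i ∈ Finset.range n, ω (p i) (p (i+1)) := by
              rw [Finset.mul_sum]
              exact Finset.sum_congr rfl fun i _ => by ring
          _ ≤ 2 * C * η ^ (θ-1) * ω 0 t :=
              mul_le_mul_of_nonneg_left hchain (by positivity)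
      refine final.trans ?_
      have step1 : 2 * C * η ^ (θ-1) * ω 0 t ≤ 2 * C * (ε / (2 * C * (ω 0 t + 1))) * ω 0 t :=
        mul_le_mul_of_nonneg_right (mul_le_mul_of_nonneg_left hηA (by positivity)) hWnn
      have step2 : 2 * C * (ε / (2 * C * (ω 0 t + 1))) * ω 0 t ≤ ε := by
        have h2 : 2*C*(ε/(2*C*(ω 0 t+1)))*ω 0 t = ε * ((2*C*ω 0 t)/(2*C*(ω 0 t+1))) := by
          field_simp
        rw [h2]
        have hle1 : (2*C*ω 0 t)/(2*C*(ω 0 t+1)) ≤ 1 := by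
          rw [div_le_one hDpos]; nlinarith
        calc ε * ((2*C*ω 0 t)/(2*C*(ω 0 t+1))) ≤ ε * 1 :=
            mul_le_mul_of_nonneg_left hle1 hε.le
          _ = ε := mul_one ε
      exact step1.trans step2
    have hzero : ‖Ψ t - Φ t‖ ≤ 0 := by
      by_contra hcon
      push_neg at hcon
      have := hle (‖Ψ t - Φ t‖ / 2) (by linarith)
      linarith
    exact sub_eq_zero.mp (norm_le_zero_iff.mp hzero)

end SewingAux

/-- Sewing Lemma. -/
theorem sewing_lemma {d : ℕ} (T K θ : ℝ) (hT : 0 < T) (hK : 0 < K) (hθ : 1 < θ)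
    (Ξ : ℝ → ℝ → Fin d → ℝ)
    (hΞcont : ContinuousOn (fun z : ℝ × ℝ => Ξ z.1 z.2)
      {z : ℝ × ℝ | 0 ≤ z.1 ∧ z.1 ≤ z.2 ∧ z.2 ≤ T})
    (ω : ℝ → ℝ → ℝ) (hω : IsControlFun T ω)
    (hbound : ∀ s u t : ℝ, 0 ≤ s → s ≤ u → u ≤ t → t ≤ T →
      ‖Ξ s t - Ξ s u - Ξ u t‖ ≤ K * ω s t ^ θ) :
    ∃ Φ : ℝ → Fin d → ℝ,
      (Φ 0 = 0 ∧
        (∀ s t : ℝ, 0 ≤ s → s ≤ t → t ≤ T →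
          ‖Φ t - Φ s - Ξ s t‖ ≤ K * (1 - 2 ^ (1 - θ))⁻¹ * ω s t ^ θ) ∧
        (∀ s t : ℝ, 0 ≤ s → s ≤ t → t ≤ T → RiemannLimit s t Ξ (Φ t - Φ s))) ∧
      ∀ Ψ : ℝ → Fin d → ℝ,
        (Ψ 0 = 0 ∧
          ∀ s t : ℝ, 0 ≤ s → s ≤ t → t ≤ T →
            ‖Ψ t - Ψ s - Ξ s t‖ ≤ K * (1 - 2 ^ (1 - θ))⁻¹ * ω s t ^ θ) →
        ∀ t ∈ Set.Icc (0 : ℝ) T, Ψ t = Φ t :=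
  SewingAux.main T K θ hT hK hθ Ξ hΞcont ω hω hbound
end

section
/- Fix α ∈ (0,1) and X^1_t = Σ_{k=1}^∞ 2^{−αk} sin(2^k π t) on [−1,1]. Then X^1 is not β-Hölder continuous for any β > α; specifically, for t_n = 2^{−n}, the quotient |X^1_{t_n} − X^1_0| / t_n^β ≥ 2^{(β−α)n + α} tends to infinity as n → ∞. -/
open Real Filter Topology

/-- the lacunary series `X¹` is not `β`-Hölder at `0` for `β > α`:
along `t_n = 2^{-n}` the Hölder quotient is at least `2^{(β-α)n+α}` and blows up. -/
theorem lacunary_series_not_holder (α β : ℝ) (hα : α ∈ Set.Ioo (0 : ℝ) 1) (hβ : α < β)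
    (X1 : ℝ → ℝ)
    (hX1 : ∀ t : ℝ, X1 t = ∑' k : ℕ, 2 ^ (-α * (k + 1)) * Real.sin (2 ^ (k + 1) * π * t)) :
    (∀ n : ℕ, 2 ≤ n →
      (2 : ℝ) ^ ((β - α) * n + α) ≤
        |X1 (2 ^ (-(n : ℝ))) - X1 0| / ((2 : ℝ) ^ (-(n : ℝ))) ^ β) ∧
    Tendsto (fun n : ℕ => |X1 (2 ^ (-(n : ℝ))) - X1 0| / ((2 : ℝ) ^ (-(n : ℝ))) ^ β)
      atTop atTop := by
  obtain ⟨hα0, hα1⟩ := hα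
  have hX10 : X1 0 = 0 := by
    rw [hX1]; simp
  have key : ∀ n : ℕ, 2 ≤ n →
      (2 : ℝ) ^ ((β - α) * n + α) ≤
        |X1 (2 ^ (-(n : ℝ))) - X1 0| / ((2 : ℝ) ^ (-(n : ℝ))) ^ β := by
    intro n hn
    set t : ℝ := 2 ^ (-(n : ℝ)) with ht
    have ht0 : (0 : ℝ) < t := Real.rpow_pos_of_pos two_pos _
    set f : ℕ → ℝ := fun k => 2 ^ (-α * (k + 1)) * Real.sin (2 ^ (k + 1) * π * t) with hf
    have hsin : ∀ k : ℕ, 0 ≤ Real.sin (2 ^ (k + 1) * π * t) := by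
      intro k
      by_cases h : k + 1 ≤ n
      · have harg : (2 : ℝ) ^ (k + 1) * π * t = π * 2 ^ (((k : ℝ) + 1) - n) := by
          rw [ht, ← Real.rpow_natCast 2 (k + 1),
            show (2 : ℝ) ^ (((k + 1 : ℕ)) : ℝ) * π * 2 ^ (-(n : ℝ))
              = π * ((2 : ℝ) ^ (((k + 1 : ℕ)) : ℝ) * 2 ^ (-(n : ℝ))) from by ring,
            ← Real.rpow_add two_pos]
          push_cast
          ring_nf
        rw [harg]
        apply Real.sin_nonneg_of_nonneg_of_le_pi
        · positivity
        · have h1 : (2 : ℝ) ^ (((k : ℝ) + 1) - n) ≤ 1 := by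
            apply Real.rpow_le_one_of_one_le_of_nonpos one_le_two
            have : ((k : ℝ) + 1) ≤ n := by exact_mod_cast h
            linarith
          nlinarith [Real.pi_pos, Real.rpow_pos_of_pos two_pos (((k : ℝ) + 1) - n)]
      · push_neg at h
        have harg : (2 : ℝ) ^ (k + 1) * π * t = ((2 ^ (k + 1 - n) : ℕ) : ℝ) * π := by
          rw [ht]
          have h1 : (2 : ℝ) ^ (k + 1) = 2 ^ (k + 1 - n) * 2 ^ n := by
            rw [← pow_add]; congr 1; omega
          have h2 : (2 : ℝ) ^ (n : ℕ) * 2 ^ (-(n : ℝ)) = 1 := by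
            rw [← Real.rpow_natCast 2 n, ← Real.rpow_add two_pos]
            simp
          rw [h1, show (2 : ℝ) ^ (k + 1 - n) * 2 ^ n * π * 2 ^ (-(n : ℝ))
              = 2 ^ (k + 1 - n) * π * ((2 : ℝ) ^ (n : ℕ) * 2 ^ (-(n : ℝ))) from by ring,
            h2, mul_one]
          push_cast
          ring
        rw [harg, Real.sin_nat_mul_pi]
    have hpos : ∀ k, 0 ≤ f k := fun k =>
      mul_nonneg (Real.rpow_nonneg (by norm_num) _) (hsin k)
    have hrlt : (2 : ℝ) ^ (-α) < 1 :=
      Real.rpow_lt_one_of_one_lt_of_neg one_lt_two (by linarith)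
    have hrnn : (0 : ℝ) ≤ (2 : ℝ) ^ (-α) := Real.rpow_nonneg (by norm_num) _
    have hle : ∀ k, f k ≤ ((2 : ℝ) ^ (-α)) ^ (k + 1) := by
      intro k
      have heq : (2 : ℝ) ^ (-α * (k + 1)) = ((2 : ℝ) ^ (-α)) ^ (k + 1) := by
        rw [← Real.rpow_natCast ((2 : ℝ) ^ (-α)) (k + 1), ← Real.rpow_mul (by norm_num)]
        push_cast
        ring_nf
      calc f k ≤ 2 ^ (-α * (k + 1)) * 1 := by
            apply mul_le_mul_of_nonneg_left (Real.sin_le_one _)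
              (Real.rpow_nonneg (by norm_num) _)
        _ = ((2 : ℝ) ^ (-α)) ^ (k + 1) := by rw [mul_one, heq]
    have hg : Summable (fun k : ℕ => ((2 : ℝ) ^ (-α)) ^ (k + 1)) := by
      have := summable_geometric_of_lt_one hrnn hrlt
      simpa [pow_succ, mul_comm] using this.mul_left ((2 : ℝ) ^ (-α))
    have hsum : Summable f := Summable.of_nonneg_of_le hpos hle hg
    have hterm : f (n - 2) = 2 ^ (α - α * n) := by
      have h1 : ((n - 2 : ℕ) : ℝ) = (n : ℝ) - 2 := by
        push_cast [hn]; ring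
      have harg : (2 : ℝ) ^ ((n - 2) + 1) * π * t = π / 2 := by
        rw [ht, ← Real.rpow_natCast 2 ((n - 2) + 1)]
        rw [show ((((n - 2) + 1 : ℕ)) : ℝ) = (n : ℝ) - 1 by push_cast [hn]; ring]
        rw [show (2 : ℝ) ^ ((n : ℝ) - 1) * π * 2 ^ (-(n : ℝ))
            = π * ((2 : ℝ) ^ ((n : ℝ) - 1) * 2 ^ (-(n : ℝ))) from by ring]
        rw [← Real.rpow_add two_pos]
        rw [show (n : ℝ) - 1 + -(n : ℝ) = -1 by ring, Real.rpow_neg_one]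
        ring
      rw [hf]
      simp only
      rw [harg, Real.sin_pi_div_two, mul_one, h1]
      ring_nf
    have hlow : (2 : ℝ) ^ (α - α * n) ≤ X1 t := by
      rw [hX1]
      calc (2 : ℝ) ^ (α - α * n) = f (n - 2) := hterm.symm
        _ ≤ ∑' k, f k := Summable.le_tsum hsum _ (fun j _ => hpos j)
    have hXnn : 0 ≤ X1 t := le_trans (Real.rpow_nonneg (by norm_num) _) hlow
    rw [hX10, sub_zero, abs_of_nonneg hXnn]
    have hden : t ^ β = (2 : ℝ) ^ (-(n : ℝ) * β) := by
      rw [ht, ← Real.rpow_mul (by norm_num)]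
    rw [hden]
    rw [show (2 : ℝ) ^ ((β - α) * n + α)
        = 2 ^ (α - α * n) / 2 ^ (-(n : ℝ) * β) from by
      rw [← Real.rpow_sub two_pos]; ring_nf]
    gcongr
  refine ⟨key, ?_⟩
  have hr : (1 : ℝ) < (2 : ℝ) ^ (β - α) :=
    (Real.one_lt_rpow_iff_of_pos two_pos).mpr (Or.inl ⟨one_lt_two, by linarith⟩)
  have hgeom : Tendsto (fun n : ℕ => (2 : ℝ) ^ ((β - α) * n + α)) atTop atTop := by
    have h1 : Tendsto (fun n : ℕ => ((2 : ℝ) ^ (β - α)) ^ n * (2 : ℝ) ^ α) atTop atTop :=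
      (tendsto_pow_atTop_atTop_of_one_lt hr).atTop_mul_const
        (Real.rpow_pos_of_pos two_pos _)
    refine h1.congr fun n => ?_
    rw [← Real.rpow_natCast ((2 : ℝ) ^ (β - α)) n, ← Real.rpow_mul (by norm_num),
      ← Real.rpow_add two_pos]

  exact tendsto_atTop_mono' atTop
    ((eventually_ge_atTop 2).mono fun n hn => key n hn) hgeom
end

section
/- Fix α ∈ (0,1) and m ∈ N, and let X^{1,m}_t = Σ_{k=1}^m 2^{−αk} sin(2^k π t), X^{2,m}_t = Σ_{k=1}^m 2^{−αk} cos(2^k π t) on [−1,1]. Then the Lévy area of (X^{1,m}, X^{2,m}), namely ∫_{−1}^1 X^{1,m}_s d X^{2,m}_s − ∫_{−1}^1 X^{2,m}_s d X^{1,m}_s (classical Riemann–Stieltjes integrals of smooth functions), equals −2π Σ_{k=1}^m 2^{(1−2α)k}. In particular, for α ≤ 1/2 this quantity diverges to −∞ as m → ∞. -/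
open Real Filter Topology Finset

lemma intCos (n : ℤ) : ∫ s in (-1:ℝ)..1, Real.cos (n * π * s) = if n = 0 then 2 else 0 := by
  rcases eq_or_ne n 0 with h | h
  · norm_num [h]
  · rw [if_neg h]
    have hc : (n:ℝ) * π ≠ 0 := mul_ne_zero (Int.cast_ne_zero.mpr h) Real.pi_ne_zero
    have := intervalIntegral.integral_comp_mul_left (a := (-1:ℝ)) (b := 1)
      (c := (n:ℝ)*π) Real.cos hc
    simp only [mul_comm] at this ⊢
    rw [this, integral_cos]
    have h1 : Real.sin ((n:ℝ)*π) = 0 := Real.sin_int_mul_pi n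
    rw [show π*(n:ℝ)*1 = (n:ℝ)*π by ring, show π*(n:ℝ)*(-1) = -((n:ℝ)*π) by ring,
      Real.sin_neg, h1]
    simp

lemma Jsin (a b : ℕ) (ha : a ≠ 0) (hb : b ≠ 0) :
    ∫ s in (-1:ℝ)..1, Real.sin (a*π*s) * Real.sin (b*π*s) = if a = b then 1 else 0 := by
  have key : ∀ s : ℝ, Real.sin (a*π*s) * Real.sin (b*π*s)
      = (Real.cos (((a:ℤ)-b : ℤ)*π*s) - Real.cos (((a:ℤ)+b : ℤ)*π*s)) / 2 := by
    intro s
    push_cast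
    rw [show ((a:ℝ)-b)*π*s = a*π*s - b*π*s by ring, show ((a:ℝ)+b)*π*s = a*π*s + b*π*s by ring,
      Real.cos_sub, Real.cos_add]
    ring
  simp only [key]
  have i1 : IntervalIntegrable (fun s => Real.cos (((a:ℤ)-b : ℤ)*π*s)) MeasureTheory.volume (-1) 1 :=
    (Real.continuous_cos.comp (continuous_const.mul continuous_id)).intervalIntegrable _ _
  have i2 : IntervalIntegrable (fun s => Real.cos (((a:ℤ)+b : ℤ)*π*s)) MeasureTheory.volume (-1) 1 :=
    (Real.continuous_cos.comp (continuous_const.mul continuous_id)).intervalIntegrable _ _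
  rw [intervalIntegral.integral_div, intervalIntegral.integral_sub i1 i2, intCos, intCos]
  have hab : (a:ℤ) + b ≠ 0 := by positivity
  rw [if_neg hab]
  rcases eq_or_ne a b with h | h
  · simp [h]
  · rw [if_neg (by omega : (a:ℤ) - b ≠ 0), if_neg h]; norm_num

lemma Jcos (a b : ℕ) (ha : a ≠ 0) (hb : b ≠ 0) :
    ∫ s in (-1:ℝ)..1, Real.cos (a*π*s) * Real.cos (b*π*s) = if a = b then 1 else 0 := by
  have key : ∀ s : ℝ, Real.cos (a*π*s) * Real.cos (b*π*s)
      = (Real.cos (((a:ℤ)-b : ℤ)*π*s) + Real.cos (((a:ℤ)+b : ℤ)*π*s)) / 2 := by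
    intro s
    push_cast
    rw [show ((a:ℝ)-b)*π*s = a*π*s - b*π*s by ring, show ((a:ℝ)+b)*π*s = a*π*s + b*π*s by ring,
      Real.cos_sub, Real.cos_add]
    ring
  simp only [key]
  have i1 : IntervalIntegrable (fun s => Real.cos (((a:ℤ)-b : ℤ)*π*s)) MeasureTheory.volume (-1) 1 :=
    (Real.continuous_cos.comp (continuous_const.mul continuous_id)).intervalIntegrable _ _
  have i2 : IntervalIntegrable (fun s => Real.cos (((a:ℤ)+b : ℤ)*π*s)) MeasureTheory.volume (-1) 1 :=
    (Real.continuous_cos.comp (continuous_const.mul continuous_id)).intervalIntegrable _ _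
  rw [intervalIntegral.integral_div, intervalIntegral.integral_add i1 i2, intCos, intCos]
  have hab : (a:ℤ) + b ≠ 0 := by positivity
  rw [if_neg hab]
  rcases eq_or_ne a b with h | h
  · simp [h]
  · rw [if_neg (by omega : (a:ℤ) - b ≠ 0), if_neg h]; norm_num

lemma casthlp (k : ℕ) : ((2^(k+1):ℕ):ℝ) = (2:ℝ)^(k+1) := by push_cast; ring

lemma hiff (k l : ℕ) : ((2:ℕ)^(k+1) = 2^(l+1)) = (k = l) :=
  propext ⟨fun h => by have := Nat.pow_right_injective (le_refl 2) h; omega, fun h => by rw [h]⟩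

lemma intSum_sin (m : ℕ) (u v : ℕ → ℝ) :
    ∫ s in (-1:ℝ)..1, (∑ k ∈ range m, u k * Real.sin ((2:ℝ)^(k+1)*π*s)) *
      (∑ l ∈ range m, v l * Real.sin ((2:ℝ)^(l+1)*π*s)) = ∑ k ∈ range m, u k * v k := by
  have h : ∀ s : ℝ, (∑ k ∈ range m, u k * Real.sin ((2:ℝ)^(k+1)*π*s)) *
      (∑ l ∈ range m, v l * Real.sin ((2:ℝ)^(l+1)*π*s))
      = ∑ k ∈ range m, ∑ l ∈ range m,
          (u k * v l) * (Real.sin (((2^(k+1):ℕ):ℝ)*π*s) * Real.sin (((2^(l+1):ℕ):ℝ)*π*s)) := by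
    intro s
    rw [Finset.sum_mul_sum]
    refine Finset.sum_congr rfl fun k _ => Finset.sum_congr rfl fun l _ => ?_
    rw [casthlp, casthlp]; ring
  simp only [h]
  rw [intervalIntegral.integral_finset_sum (fun k _ => ?_)]
  · refine Finset.sum_congr rfl fun k hk => ?_
    rw [intervalIntegral.integral_finset_sum (fun l _ => ?_)]
    · have : ∀ l ∈ range m, (∫ s in (-1:ℝ)..1,
          (u k * v l) * (Real.sin (((2^(k+1):ℕ):ℝ)*π*s) * Real.sin (((2^(l+1):ℕ):ℝ)*π*s)))
          = (u k * v l) * (if k = l then 1 else 0) := by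
        intro l _
        rw [intervalIntegral.integral_const_mul, Jsin _ _ (by positivity) (by positivity)]; simp only [hiff]
      rw [Finset.sum_congr rfl this]
      simp only [mul_ite, mul_one, mul_zero, Finset.sum_ite_eq, hk, if_true]
    · exact ((continuous_const.mul ((Real.continuous_sin.comp (continuous_const.mul continuous_id)).mul
        (Real.continuous_sin.comp (continuous_const.mul continuous_id)))).intervalIntegrable _ _)
  · exact (continuous_finset_sum _ fun l _ =>
      (continuous_const.mul ((Real.continuous_sin.comp (continuous_const.mul continuous_id)).mul
        (Real.continuous_sin.comp (continuous_const.mul continuous_id))))).intervalIntegrable _ _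

lemma intSum_cos (m : ℕ) (u v : ℕ → ℝ) :
    ∫ s in (-1:ℝ)..1, (∑ k ∈ range m, u k * Real.cos ((2:ℝ)^(k+1)*π*s)) *
      (∑ l ∈ range m, v l * Real.cos ((2:ℝ)^(l+1)*π*s)) = ∑ k ∈ range m, u k * v k := by
  have h : ∀ s : ℝ, (∑ k ∈ range m, u k * Real.cos ((2:ℝ)^(k+1)*π*s)) *
      (∑ l ∈ range m, v l * Real.cos ((2:ℝ)^(l+1)*π*s))
      = ∑ k ∈ range m, ∑ l ∈ range m,
          (u k * v l) * (Real.cos (((2^(k+1):ℕ):ℝ)*π*s) * Real.cos (((2^(l+1):ℕ):ℝ)*π*s)) := by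
    intro s
    rw [Finset.sum_mul_sum]
    refine Finset.sum_congr rfl fun k _ => Finset.sum_congr rfl fun l _ => ?_
    rw [casthlp, casthlp]; ring
  simp only [h]
  rw [intervalIntegral.integral_finset_sum (fun k _ => ?_)]
  · refine Finset.sum_congr rfl fun k hk => ?_
    rw [intervalIntegral.integral_finset_sum (fun l _ => ?_)]
    · have : ∀ l ∈ range m, (∫ s in (-1:ℝ)..1,
          (u k * v l) * (Real.cos (((2^(k+1):ℕ):ℝ)*π*s) * Real.cos (((2^(l+1):ℕ):ℝ)*π*s)))
          = (u k * v l) * (if k = l then 1 else 0) := by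
        intro l _
        rw [intervalIntegral.integral_const_mul, Jcos _ _ (by positivity) (by positivity)]; simp only [hiff]
      rw [Finset.sum_congr rfl this]
      simp only [mul_ite, mul_one, mul_zero, Finset.sum_ite_eq, hk, if_true]
    · exact ((continuous_const.mul ((Real.continuous_cos.comp (continuous_const.mul continuous_id)).mul
        (Real.continuous_cos.comp (continuous_const.mul continuous_id)))).intervalIntegrable _ _)
  · exact (continuous_finset_sum _ fun l _ =>
      (continuous_const.mul ((Real.continuous_cos.comp (continuous_const.mul continuous_id)).mul
        (Real.continuous_cos.comp (continuous_const.mul continuous_id))))).intervalIntegrable _ _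

lemma derivCosSum (c : ℕ → ℝ) (m : ℕ) (t : ℝ) :
    HasDerivAt (fun t => ∑ k ∈ range m, c k * Real.cos ((2:ℝ)^(k+1)*π*t))
      (∑ k ∈ range m, (c k * -((2:ℝ)^(k+1)*π)) * Real.sin ((2:ℝ)^(k+1)*π*t)) t := by
  apply HasDerivAt.fun_sum
  intro k _
  have h1 : HasDerivAt (fun t : ℝ => (2:ℝ)^(k+1)*π*t) ((2:ℝ)^(k+1)*π) t := by
    simpa using (hasDerivAt_id t).const_mul ((2:ℝ)^(k+1)*π)
  have := (h1.cos.const_mul (c k))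
  convert this using 1
  · rfl
  ring

lemma derivSinSum (c : ℕ → ℝ) (m : ℕ) (t : ℝ) :
    HasDerivAt (fun t => ∑ k ∈ range m, c k * Real.sin ((2:ℝ)^(k+1)*π*t))
      (∑ k ∈ range m, (c k * ((2:ℝ)^(k+1)*π)) * Real.cos ((2:ℝ)^(k+1)*π*t)) t := by
  apply HasDerivAt.fun_sum
  intro k _
  have h1 : HasDerivAt (fun t : ℝ => (2:ℝ)^(k+1)*π*t) ((2:ℝ)^(k+1)*π) t := by
    simpa using (hasDerivAt_id t).const_mul ((2:ℝ)^(k+1)*π)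
  have := (h1.sin.const_mul (c k))
  convert this using 1
  · rfl
  ring

/-- the Lévy area of the truncated lacunary series is
`-2π ∑_{k=1}^m 2^{(1-2α)k}`, which diverges to `-∞` as `m → ∞` when `α ≤ 1/2`. -/
theorem levyArea_truncated_lacunary (α : ℝ) (hα : α ∈ Set.Ioo (0 : ℝ) 1)
    (X1 X2 : ℕ → ℝ → ℝ)
    (hX1 : ∀ m t, X1 m t = ∑ k ∈ Finset.range m, 2 ^ (-α * (k + 1)) * Real.sin (2 ^ (k + 1) * π * t))
    (hX2 : ∀ m t, X2 m t = ∑ k ∈ Finset.range m, 2 ^ (-α * (k + 1)) * Real.cos (2 ^ (k + 1) * π * t)) :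
    (∀ m : ℕ,
      (∫ s in (-1 : ℝ)..1, X1 m s * deriv (X2 m) s) -
        (∫ s in (-1 : ℝ)..1, X2 m s * deriv (X1 m) s) =
      -(2 * π) * ∑ k ∈ Finset.range m, 2 ^ ((1 - 2 * α) * (k + 1))) ∧
    (α ≤ 1 / 2 →
      Tendsto (fun m : ℕ =>
          (∫ s in (-1 : ℝ)..1, X1 m s * deriv (X2 m) s) -
            (∫ s in (-1 : ℝ)..1, X2 m s * deriv (X1 m) s))
        atTop atBot) := by
  set c : ℕ → ℝ := fun k => (2:ℝ) ^ (-α * (k + 1) : ℝ) with hc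
  have key : ∀ m : ℕ,
      (∫ s in (-1 : ℝ)..1, X1 m s * deriv (X2 m) s) -
        (∫ s in (-1 : ℝ)..1, X2 m s * deriv (X1 m) s) =
      -(2 * π) * ∑ k ∈ Finset.range m, 2 ^ ((1 - 2 * α) * (k + 1)) := by
    intro m
    have e1 : X1 m = fun t => ∑ k ∈ range m, c k * Real.sin ((2:ℝ)^(k+1)*π*t) :=
      funext (hX1 m)
    have e2 : X2 m = fun t => ∑ k ∈ range m, c k * Real.cos ((2:ℝ)^(k+1)*π*t) :=
      funext (hX2 m)
    have d2 : ∀ t, deriv (X2 m) t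
        = ∑ k ∈ range m, (c k * -((2:ℝ)^(k+1)*π)) * Real.sin ((2:ℝ)^(k+1)*π*t) := by
      intro t; rw [e2]; exact (derivCosSum c m t).deriv
    have d1 : ∀ t, deriv (X1 m) t
        = ∑ k ∈ range m, (c k * ((2:ℝ)^(k+1)*π)) * Real.cos ((2:ℝ)^(k+1)*π*t) := by
      intro t; rw [e1]; exact (derivSinSum c m t).deriv
    have I1 : (∫ s in (-1 : ℝ)..1, X1 m s * deriv (X2 m) s)
        = ∑ k ∈ range m, c k * (c k * -((2:ℝ)^(k+1)*π)) := by
      rw [show (fun s => X1 m s * deriv (X2 m) s)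
          = fun s => (∑ k ∈ range m, c k * Real.sin ((2:ℝ)^(k+1)*π*s)) *
              (∑ l ∈ range m, (c l * -((2:ℝ)^(l+1)*π)) * Real.sin ((2:ℝ)^(l+1)*π*s)) from
        funext fun s => by rw [e1, d2 s]]
      exact intSum_sin m _ _
    have I2 : (∫ s in (-1 : ℝ)..1, X2 m s * deriv (X1 m) s)
        = ∑ k ∈ range m, c k * (c k * ((2:ℝ)^(k+1)*π)) := by
      rw [show (fun s => X2 m s * deriv (X1 m) s)
          = fun s => (∑ k ∈ range m, c k * Real.cos ((2:ℝ)^(k+1)*π*s)) *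
              (∑ l ∈ range m, (c l * ((2:ℝ)^(l+1)*π)) * Real.cos ((2:ℝ)^(l+1)*π*s)) from
        funext fun s => by rw [e2, d1 s]]
      exact intSum_cos m _ _
    rw [I1, I2, ← Finset.sum_sub_distrib, Finset.mul_sum]
    refine Finset.sum_congr rfl fun k _ => ?_
    have hck : c k * c k * (2:ℝ)^(k+1) = (2:ℝ) ^ ((1 - 2*α) * (k + 1) : ℝ) := by
      rw [hc]
      rw [← Real.rpow_natCast 2 (k+1), ← Real.rpow_add (by norm_num : (0:ℝ) < 2),
        ← Real.rpow_add (by norm_num : (0:ℝ) < 2)]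
      congr 1
      push_cast
      ring
    rw [← hck]
    ring
  refine ⟨key, fun hhalf => ?_⟩
  simp only [key]
  have hneg : (-(2*π) : ℝ) < 0 := by have := Real.pi_pos; linarith
  rw [tendsto_const_mul_atBot_of_neg hneg]
  apply tendsto_atTop_mono (f := fun m : ℕ => (m:ℝ)) (fun m => ?_) tendsto_natCast_atTop_atTop
  calc (m:ℝ) = ∑ _k ∈ range m, (1:ℝ) := by simp
    _ ≤ ∑ k ∈ range m, (2:ℝ) ^ ((1 - 2*α) * (k + 1) : ℝ) := by
        refine Finset.sum_le_sum fun k _ => ?_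
        have he : (0:ℝ) ≤ (1 - 2*α) * (k + 1) := by
          apply mul_nonneg (by linarith) (by positivity)
        calc (1:ℝ) = (2:ℝ) ^ (0:ℝ) := by rw [Real.rpow_zero]
          _ ≤ (2:ℝ) ^ ((1 - 2*α) * (k + 1) : ℝ) :=
            Real.rpow_le_rpow_of_exponent_le (by norm_num) he
end

section
/- Let p ≥ 1, (π_n) an increasing sequence of partitions of [0,T] with mesh tending to 0, X ∈ V^p([0,T], R^d) having quadratic variation along (π_n) in the sense of Föllmer, and Y ∈ C_X^q. Then the quadratic covariation [Y,X]_T := lim_{n→∞} Σ_{[s,t]∈π_n} ⟨X_t−X_s, Y_t−Y_s⟩ exists and is given by [Y,X]_T = Σ_{1≤i,j≤d} ∫_0^T Y'_t(i,j) d[X^i,X^j]_t, where the last integral is the Riemann–Stieltjes integral against the continuous quadratic covariation functions t ↦ [X^i,X^j]_t. -/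
open Finset Filter Topology

section Aux

namespace GridPartition
variable {T : ℝ} (π : GridPartition 0 T)

lemma t_nonneg (k : Fin (π.n + 1)) : 0 ≤ π.t k := by
  have := π.mono (Fin.zero_le k); rwa [π.first] at this

lemma t_le (k : Fin (π.n + 1)) : π.t k ≤ T :=
  le_of_le_of_eq (π.mono (Fin.le_last k)) π.last

lemma t_mem (k : Fin (π.n + 1)) : π.t k ∈ Set.Icc (0:ℝ) T :=
  ⟨π.t_nonneg k, π.t_le k⟩

lemma diff_le_mesh (i : Fin π.n) : π.t i.succ - π.t i.castSucc ≤ π.mesh :=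
  le_ciSup (f := fun i : Fin π.n => π.t i.succ - π.t i.castSucc)
    (Set.Finite.bddAbove (Set.finite_range _)) i

lemma n_pos (hT : 0 < T) : 0 < π.n := by
  rcases Nat.eq_zero_or_pos π.n with h | h
  · exfalso
    have h0 : π.t 0 = 0 := π.first
    have hl : π.t (Fin.last π.n) = T := π.last
    have he : (Fin.last π.n) = 0 := by ext; simp [h]
    rw [he, h0] at hl
    exact absurd hl (by linarith)
  · exact h

end GridPartition

lemma fin_telescope : ∀ {M : ℕ} (f : Fin (M+1) → ℝ),
    ∑ j : Fin M, (f j.succ - f j.castSucc) = f (Fin.last M) - f 0 := by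
  intro M
  induction M with
  | zero => intro f; simp
  | succ M ih =>
    intro f
    rw [Fin.sum_univ_castSucc]
    have h2 := ih (fun j => f j.castSucc)
    simp only [← Fin.succ_castSucc] at h2
    rw [h2]
    have h3 : ((0 : Fin (M+1)).castSucc) = (0 : Fin (M+2)) := rfl
    have h5 : (Fin.last M).succ = Fin.last (M+1) := rfl
    rw [h3, h5]
    ring

/-- The Föllmer truncated quadratic sum functional. -/
def Ffun {T : ℝ} (ρ : GridPartition 0 T) (g : ℝ → ℝ) (u : ℝ) : ℝ :=
  ∑ i : Fin ρ.n, (g (min (ρ.t i.succ) u) - g (min (ρ.t i.castSucc) u))^2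

lemma Ffun_T {T : ℝ} (ρ : GridPartition 0 T) (g : ℝ → ℝ) :
    Ffun ρ g T = ∑ i : Fin ρ.n, (g (ρ.t i.succ) - g (ρ.t i.castSucc))^2 := by
  unfold Ffun
  refine Finset.sum_congr rfl fun i _ => ?_
  rw [min_eq_left (ρ.t_le _), min_eq_left (ρ.t_le _)]

lemma range_subset_of_le {T : ℝ} {π : ℕ → GridPartition 0 T} (hπ : IncreasingSeq π)
    {m n : ℕ} (h : m ≤ n) : Set.range (π m).t ⊆ Set.range (π n).t := by
  induction n, h using Nat.le_induction with
  | base => exact subset_rfl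
  | succ n hmn ih => exact ih.trans (hπ.1 n)

lemma key_i {T : ℝ} (σ : GridPartition 0 T) (g h : ℝ → ℝ) (ε δ : ℝ)
    (hUC : ∀ x ∈ Set.Icc (0:ℝ) T, ∀ y ∈ Set.Icc (0:ℝ) T, |x - y| ≤ δ → |h x - h y| ≤ ε)
    (hmesh : σ.mesh ≤ δ)
    (s u : ℝ) (hs : 0 ≤ s) (hsu : s ≤ u) (huT : u ≤ T)
    (hdich : ∀ x ∈ Set.range σ.t, x ≤ s ∨ u ≤ x) :
    |h s * (g u - g s)^2 -
      ∑ j : Fin σ.n, h (σ.t j.castSucc) *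
        ((g (min u (σ.t j.succ)) - g (min s (σ.t j.succ)))^2 -
         (g (min u (σ.t j.castSucc)) - g (min s (σ.t j.castSucc)))^2)| ≤
      ε * (g u - g s)^2 := by
  set c := (g u - g s)^2 with hcdef
  set e : Fin (σ.n+1) → ℝ := fun j => (g (min u (σ.t j)) - g (min s (σ.t j)))^2 with hedef
  have he : ∀ j, e j = if u ≤ σ.t j then c else 0 := by
    intro j
    by_cases hj : u ≤ σ.t j
    · simp only [hedef, hj, if_true, min_eq_left hj, min_eq_left (hsu.trans hj), hcdef]
    · have hle : σ.t j ≤ s := by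
        rcases hdich _ ⟨j, rfl⟩ with h1 | h2
        · exact h1
        · exact absurd h2 hj
      simp only [hedef, hj, if_false, min_eq_right (hle.trans hsu), min_eq_right hle,
        sub_self, ne_eq, OfNat.ofNat_ne_zero, not_false_eq_true, zero_pow]
  have hc : 0 ≤ c := sq_nonneg _
  have hΔnn : ∀ j : Fin σ.n, 0 ≤ e j.succ - e j.castSucc := by
    intro j
    rw [he, he]
    by_cases h1 : u ≤ σ.t j.castSucc
    · have h2 : u ≤ σ.t j.succ := h1.trans (σ.mono (Fin.castSucc_le_succ j))
      simp [h1, h2]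
    · simp only [h1, if_false, sub_zero]
      split <;> simp [hc]
  have e0 : e 0 = 0 := by
    have h0 : σ.t 0 = 0 := σ.first
    simp only [hedef, h0, min_eq_right (hs.trans hsu), min_eq_right hs, sub_self]
    simp
  have elast : e (Fin.last σ.n) = c := by
    have hl : σ.t (Fin.last σ.n) = T := σ.last
    simp only [hedef, hl, min_eq_left huT, min_eq_left (hsu.trans huT), hcdef]
  have tel : ∑ j : Fin σ.n, (e j.succ - e j.castSucc) = c := by
    rw [fin_telescope e, e0, elast, sub_zero]
  have hsum : ∑ j : Fin σ.n, h (σ.t j.castSucc) *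
        ((g (min u (σ.t j.succ)) - g (min s (σ.t j.succ)))^2 -
         (g (min u (σ.t j.castSucc)) - g (min s (σ.t j.castSucc)))^2)
      = ∑ j : Fin σ.n, h (σ.t j.castSucc) * (e j.succ - e j.castSucc) := rfl
  rw [hsum]
  have hrw : h s * c - ∑ j : Fin σ.n, h (σ.t j.castSucc) * (e j.succ - e j.castSucc)
      = ∑ j : Fin σ.n, (h s - h (σ.t j.castSucc)) * (e j.succ - e j.castSucc) := by
    conv_lhs => rw [← tel, Finset.mul_sum, ← Finset.sum_sub_distrib]
    exact Finset.sum_congr rfl fun j _ => by ring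
  rw [hrw]
  calc |∑ j : Fin σ.n, (h s - h (σ.t j.castSucc)) * (e j.succ - e j.castSucc)|
      ≤ ∑ j : Fin σ.n, |(h s - h (σ.t j.castSucc)) * (e j.succ - e j.castSucc)| :=
        Finset.abs_sum_le_sum_abs _ _
    _ ≤ ∑ j : Fin σ.n, ε * (e j.succ - e j.castSucc) := by
        refine Finset.sum_le_sum fun j _ => ?_
        rw [abs_mul, abs_of_nonneg (hΔnn j)]
        by_cases hΔ : e j.succ = e j.castSucc
        · rw [hΔ, sub_self, mul_zero, mul_zero]
        · refine mul_le_mul_of_nonneg_right ?_ (hΔnn j)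
          have h1 : ¬ u ≤ σ.t j.castSucc := by
            intro h1
            have h2 : u ≤ σ.t j.succ := h1.trans (σ.mono (Fin.castSucc_le_succ j))
            rw [he, he, if_pos h1, if_pos h2] at hΔ
            exact hΔ rfl
          have h2 : u ≤ σ.t j.succ := by
            by_contra h2
            rw [he, he, if_neg h1, if_neg h2] at hΔ
            exact hΔ rfl
          have hvs : σ.t j.castSucc ≤ s := by
            rcases hdich _ ⟨j.castSucc, rfl⟩ with ha | hb
            · exact ha
            · exact absurd hb h1
          have hgap : |s - σ.t j.castSucc| ≤ δ := by
            rw [abs_of_nonneg (by linarith)]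
            have := σ.diff_le_mesh j
            have : σ.t j.succ - σ.t j.castSucc ≤ δ := le_trans this hmesh
            linarith [hsu.trans h2]
          rw [abs_sub_comm] at hgap
          have := hUC s ⟨hs, hsu.trans huT⟩ (σ.t j.castSucc) (σ.t_mem _) (by rwa [abs_sub_comm])
          exact this
    _ = ε * c := by rw [← Finset.mul_sum, tel]

lemma key {T : ℝ} (ρ σ : GridPartition 0 T) (href : Set.range σ.t ⊆ Set.range ρ.t)
    (g h : ℝ → ℝ) (ε δ : ℝ)
    (hUC : ∀ x ∈ Set.Icc (0:ℝ) T, ∀ y ∈ Set.Icc (0:ℝ) T, |x - y| ≤ δ → |h x - h y| ≤ ε)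
    (hmesh : σ.mesh ≤ δ) :
    |(∑ i : Fin ρ.n, h (ρ.t i.castSucc) * (g (ρ.t i.succ) - g (ρ.t i.castSucc))^2)
      - ∑ j : Fin σ.n, h (σ.t j.castSucc) * (Ffun ρ g (σ.t j.succ) - Ffun ρ g (σ.t j.castSucc))|
    ≤ ε * ∑ i : Fin ρ.n, (g (ρ.t i.succ) - g (ρ.t i.castSucc))^2 := by
  have hswap : ∑ j : Fin σ.n, h (σ.t j.castSucc) *
        (Ffun ρ g (σ.t j.succ) - Ffun ρ g (σ.t j.castSucc))
      = ∑ i : Fin ρ.n, ∑ j : Fin σ.n, h (σ.t j.castSucc) *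
          ((g (min (ρ.t i.succ) (σ.t j.succ)) - g (min (ρ.t i.castSucc) (σ.t j.succ)))^2 -
           (g (min (ρ.t i.succ) (σ.t j.castSucc)) - g (min (ρ.t i.castSucc) (σ.t j.castSucc)))^2) := by
    rw [Finset.sum_comm]
    refine Finset.sum_congr rfl fun j _ => ?_
    unfold Ffun
    rw [← Finset.sum_sub_distrib, Finset.mul_sum]
  rw [hswap, ← Finset.sum_sub_distrib]
  calc |∑ i : Fin ρ.n, (h (ρ.t i.castSucc) * (g (ρ.t i.succ) - g (ρ.t i.castSucc))^2 -
          ∑ j : Fin σ.n, h (σ.t j.castSucc) *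
          ((g (min (ρ.t i.succ) (σ.t j.succ)) - g (min (ρ.t i.castSucc) (σ.t j.succ)))^2 -
           (g (min (ρ.t i.succ) (σ.t j.castSucc)) - g (min (ρ.t i.castSucc) (σ.t j.castSucc)))^2))|
      ≤ ∑ i : Fin ρ.n, |h (ρ.t i.castSucc) * (g (ρ.t i.succ) - g (ρ.t i.castSucc))^2 -
          ∑ j : Fin σ.n, h (σ.t j.castSucc) *
          ((g (min (ρ.t i.succ) (σ.t j.succ)) - g (min (ρ.t i.castSucc) (σ.t j.succ)))^2 -
           (g (min (ρ.t i.succ) (σ.t j.castSucc)) - g (min (ρ.t i.castSucc) (σ.t j.castSucc)))^2)| :=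
        Finset.abs_sum_le_sum_abs _ _
    _ ≤ ∑ i : Fin ρ.n, ε * (g (ρ.t i.succ) - g (ρ.t i.castSucc))^2 := by
        refine Finset.sum_le_sum fun i _ => ?_
        exact key_i σ g h ε δ hUC hmesh (ρ.t i.castSucc) (ρ.t i.succ)
          (ρ.t_nonneg _) (ρ.mono (Fin.castSucc_le_succ i)) (ρ.t_le _)
          (fun x hx => by
            obtain ⟨k, hk⟩ := href hx
            rcases le_or_gt k i.castSucc with hkle | hklt
            · exact Or.inl (hk ▸ ρ.mono hkle)
            · exact Or.inr (hk ▸ ρ.mono (Fin.castSucc_lt_iff_succ_le.mp hklt)))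
    _ = ε * ∑ i : Fin ρ.n, (g (ρ.t i.succ) - g (ρ.t i.castSucc))^2 := (Finset.mul_sum _ _ _).symm

lemma exists_uc_delta {T : ℝ} (h : ℝ → ℝ) (hh : ContinuousOn h (Set.Icc 0 T))
    {ε : ℝ} (hε : 0 < ε) :
    ∃ δ > 0, ∀ x ∈ Set.Icc (0:ℝ) T, ∀ y ∈ Set.Icc (0:ℝ) T, |x - y| ≤ δ → |h x - h y| ≤ ε := by
  have huc : UniformContinuousOn h (Set.Icc 0 T) :=
    isCompact_Icc.uniformContinuousOn_of_continuous hh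
  obtain ⟨δ, hδ, hd⟩ := Metric.uniformContinuousOn_iff_le.1 huc ε hε
  exact ⟨δ, hδ, fun x hx y hy hxy => by
    have := hd x hx y hy (by rwa [Real.dist_eq]); rwa [Real.dist_eq] at this⟩

lemma converge_core {T : ℝ} (hT : 0 < T) (π : ℕ → GridPartition 0 T) (hπ : IncreasingSeq π)
    (g Qg h : ℝ → ℝ) (hQV : HasQV π g Qg) (hh : ContinuousOn h (Set.Icc 0 T)) :
    ∃ L : ℝ,
      Tendsto (fun m => ∑ j : Fin (π m).n, h ((π m).t j.castSucc) *
        (Qg ((π m).t j.succ) - Qg ((π m).t j.castSucc))) atTop (𝓝 L) ∧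
      Tendsto (fun n => ∑ i : Fin (π n).n, h ((π n).t i.castSucc) *
        (g ((π n).t i.succ) - g ((π n).t i.castSucc))^2) atTop (𝓝 L) := by
  set W : ℕ → ℝ := fun n => ∑ i : Fin (π n).n, h ((π n).t i.castSucc) *
        (g ((π n).t i.succ) - g ((π n).t i.castSucc))^2 with hWdef
  set V : ℕ → ℝ := fun m => ∑ j : Fin (π m).n, h ((π m).t j.castSucc) *
        (Qg ((π m).t j.succ) - Qg ((π m).t j.castSucc)) with hVdef
  set Φ : ℕ → ℕ → ℝ := fun m n => ∑ j : Fin (π m).n, h ((π m).t j.castSucc) *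
        (Ffun (π n) g ((π m).t j.succ) - Ffun (π n) g ((π m).t j.castSucc)) with hΦdef
  set S : ℕ → ℝ := fun n => ∑ i : Fin (π n).n,
        (g ((π n).t i.succ) - g ((π n).t i.castSucc))^2 with hSdef
  have hS : Tendsto S atTop (𝓝 (Qg T)) := by
    have h0 := hQV.2 T ⟨hT.le, le_refl T⟩
    have heq : ∀ n, (∑ i : Fin (π n).n,
        (g (min ((π n).t i.succ) T) - g (min ((π n).t i.castSucc) T)) ^ 2) = S n := by
      intro n
      exact (Ffun_T (π n) g)
    simpa only [heq] using h0
  obtain ⟨C, hC⟩ := hS.bddAbove_range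
  have hCS : ∀ n, S n ≤ C := fun n => hC ⟨n, rfl⟩
  have hSnn : ∀ n, 0 ≤ S n := fun n => Finset.sum_nonneg fun i _ => sq_nonneg _
  have hC0 : 0 ≤ C := (hSnn 0).trans (hCS 0)
  have hKE : ∀ ε > (0:ℝ), ∃ N, ∀ m ≥ N, ∀ n, m ≤ n → |W n - Φ m n| ≤ ε := by
    intro ε hε
    have hC1 : (0:ℝ) < C + 1 := by linarith
    have hε' : 0 < ε / (C + 1) := div_pos hε hC1
    obtain ⟨δ, hδ, hUC⟩ := exists_uc_delta h hh hε'
    obtain ⟨N, hN⟩ := Metric.tendsto_atTop.1 hπ.2 δ hδ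
    refine ⟨N, fun m hm n hmn => ?_⟩
    have hmesh : (π m).mesh ≤ δ := by
      have := hN m hm
      rw [Real.dist_eq, sub_zero] at this
      exact (le_abs_self _).trans this.le
    have hk := key (π n) (π m) (range_subset_of_le hπ hmn) g h (ε / (C + 1)) δ hUC hmesh
    refine hk.trans ?_
    have h1 : ε / (C + 1) * S n ≤ ε / (C + 1) * (C + 1) :=
      mul_le_mul_of_nonneg_left (by linarith [hCS n]) hε'.le
    rw [div_mul_cancel₀] at h1
    · exact h1
    · exact ne_of_gt hC1
  have hΦV : ∀ m, Tendsto (fun n => Φ m n) atTop (𝓝 (V m)) := by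
    intro m
    refine tendsto_finset_sum _ fun j _ => ?_
    exact ((hQV.2 _ ((π m).t_mem j.succ)).sub (hQV.2 _ ((π m).t_mem j.castSucc))).const_mul _
  have hWC : CauchySeq W := by
    rw [Metric.cauchySeq_iff']
    intro ε hε
    have hε5 : 0 < ε / 5 := by linarith
    obtain ⟨N1, hN1⟩ := hKE (ε / 5) hε5
    obtain ⟨N2, hN2⟩ := Metric.tendsto_atTop.1 (hΦV N1) (ε / 5) hε5
    refine ⟨max N1 N2, fun n hn => ?_⟩
    have hN1N : N1 ≤ max N1 N2 := le_max_left _ _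
    have hn1 : N1 ≤ n := hN1N.trans hn
    have d1 : |W n - Φ N1 n| ≤ ε / 5 := hN1 N1 le_rfl n hn1
    have d2 : |Φ N1 n - V N1| < ε / 5 := by
      have := hN2 n ((le_max_right _ _).trans hn); rwa [Real.dist_eq] at this
    have d3 : |Φ N1 (max N1 N2) - V N1| < ε / 5 := by
      have := hN2 (max N1 N2) (le_max_right _ _); rwa [Real.dist_eq] at this
    have d4 : |W (max N1 N2) - Φ N1 (max N1 N2)| ≤ ε / 5 := hN1 N1 le_rfl _ hN1N
    rw [Real.dist_eq]
    have : W n - W (max N1 N2) = (W n - Φ N1 n) + (Φ N1 n - V N1) +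
        (V N1 - Φ N1 (max N1 N2)) + (Φ N1 (max N1 N2) - W (max N1 N2)) := by ring
    rw [this]
    calc |(W n - Φ N1 n) + (Φ N1 n - V N1) + (V N1 - Φ N1 (max N1 N2)) +
          (Φ N1 (max N1 N2) - W (max N1 N2))|
        ≤ |(W n - Φ N1 n) + (Φ N1 n - V N1) + (V N1 - Φ N1 (max N1 N2))| +
          |Φ N1 (max N1 N2) - W (max N1 N2)| := abs_add_le _ _
      _ ≤ |(W n - Φ N1 n) + (Φ N1 n - V N1)| + |V N1 - Φ N1 (max N1 N2)| +
          |Φ N1 (max N1 N2) - W (max N1 N2)| := by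
            have := abs_add_le ((W n - Φ N1 n) + (Φ N1 n - V N1)) (V N1 - Φ N1 (max N1 N2))
            linarith
      _ ≤ |W n - Φ N1 n| + |Φ N1 n - V N1| + |V N1 - Φ N1 (max N1 N2)| +
          |Φ N1 (max N1 N2) - W (max N1 N2)| := by
            have := abs_add_le (W n - Φ N1 n) (Φ N1 n - V N1)
            linarith
      _ < ε := by
            rw [abs_sub_comm (V N1)] at *
            rw [abs_sub_comm (Φ N1 (max N1 N2)) (W (max N1 N2))] at *
            linarith
  obtain ⟨L, hWL⟩ := cauchySeq_tendsto_of_complete hWC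
  refine ⟨L, ?_, hWL⟩
  rw [Metric.tendsto_atTop]
  intro ε hε
  have hε4 : 0 < ε / 4 := by linarith
  obtain ⟨N, hN⟩ := hKE (ε / 4) hε4
  refine ⟨N, fun m hm => ?_⟩
  have hev : ∀ᶠ n in atTop, dist (Φ m n) (V m) < ε / 4 ∧ dist (W n) L < ε / 4 ∧ m ≤ n := by
    refine (((hΦV m).eventually (Metric.ball_mem_nhds _ hε4)).and
      ((hWL.eventually (Metric.ball_mem_nhds _ hε4)).and (eventually_ge_atTop m))).mono ?_
    intro n hn
    exact ⟨hn.1, hn.2.1, hn.2.2⟩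
  obtain ⟨n, h1, h2, h3⟩ := hev.exists
  have h4 : |W n - Φ m n| ≤ ε / 4 := hN m hm n h3
  rw [Real.dist_eq] at h1 h2 ⊢
  have : V m - L = (V m - Φ m n) + (Φ m n - W n) + (W n - L) := by ring
  rw [this]
  calc |(V m - Φ m n) + (Φ m n - W n) + (W n - L)|
      ≤ |(V m - Φ m n) + (Φ m n - W n)| + |W n - L| := abs_add_le _ _
    _ ≤ |V m - Φ m n| + |Φ m n - W n| + |W n - L| := by
        have := abs_add_le (V m - Φ m n) (Φ m n - W n)
        linarith
    _ < ε := by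
        rw [abs_sub_comm (V m) (Φ m n), abs_sub_comm (Φ m n) (W n)]
        linarith

lemma exists_uc_delta' {E : Type*} [SeminormedAddCommGroup E] {T : ℝ} (f : ℝ → E)
    (hf : ContinuousOn f (Set.Icc 0 T)) {ε : ℝ} (hε : 0 < ε) :
    ∃ δ > 0, ∀ x ∈ Set.Icc (0:ℝ) T, ∀ y ∈ Set.Icc (0:ℝ) T, |x - y| ≤ δ → ‖f x - f y‖ ≤ ε := by
  have huc : UniformContinuousOn f (Set.Icc 0 T) :=
    isCompact_Icc.uniformContinuousOn_of_continuous hf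
  obtain ⟨δ, hδ, hd⟩ := Metric.uniformContinuousOn_iff_le.1 huc ε hε
  exact ⟨δ, hδ, fun x hx y hy hxy => by
    have := hd x hx y hy (by rwa [Real.dist_eq]); rwa [dist_eq_norm] at this⟩

lemma dot_abs_le {d : ℕ} (x y : Fin d → ℝ) : |dot x y| ≤ (d : ℝ) * (‖x‖ * ‖y‖) := by
  unfold dot
  calc |∑ i, x i * y i| ≤ ∑ i, |x i * y i| := Finset.abs_sum_le_sum_abs _ _
    _ ≤ ∑ _i : Fin d, ‖x‖ * ‖y‖ := by
        refine Finset.sum_le_sum fun i _ => ?_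
        rw [abs_mul]
        have hx : |x i| ≤ ‖x‖ := by
          have := norm_le_pi_norm x i; rwa [Real.norm_eq_abs] at this
        have hy : |y i| ≤ ‖y‖ := by
          have := norm_le_pi_norm y i; rwa [Real.norm_eq_abs] at this
        exact mul_le_mul hx hy (abs_nonneg _) (norm_nonneg _)
    _ = (d : ℝ) * (‖x‖ * ‖y‖) := by simp [Finset.sum_const, nsmul_eq_mul]

lemma mulVec'_norm_le {d : ℕ} (M : Fin d → Fin d → ℝ) (v : Fin d → ℝ) :
    ‖mulVec' M v‖ ≤ (d : ℝ) * (‖M‖ * ‖v‖) := by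
  have hnn : 0 ≤ (d : ℝ) * (‖M‖ * ‖v‖) := by positivity
  rw [pi_norm_le_iff_of_nonneg hnn]
  intro i
  unfold mulVec'
  rw [Real.norm_eq_abs]
  calc |∑ j, M i j * v j| ≤ ∑ j, |M i j * v j| := Finset.abs_sum_le_sum_abs _ _
    _ ≤ ∑ _j : Fin d, ‖M‖ * ‖v‖ := by
        refine Finset.sum_le_sum fun j _ => ?_
        rw [abs_mul]
        have h1 : |M i j| ≤ ‖M‖ := by
          have h2 := norm_le_pi_norm M i
          have h3 := norm_le_pi_norm (M i) j
          rw [Real.norm_eq_abs] at h3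
          exact h3.trans h2
        have h4 : |v j| ≤ ‖v‖ := by
          have := norm_le_pi_norm v j; rwa [Real.norm_eq_abs] at this
        exact mul_le_mul h1 h4 (abs_nonneg _) (norm_nonneg _)
    _ = (d : ℝ) * (‖M‖ * ‖v‖) := by simp [Finset.sum_const, nsmul_eq_mul]

lemma remainder_tendsto {d : ℕ} {T p q r : ℝ} (hT : 0 < T)
    (hp : 1 ≤ p) (hq : 0 < q) (hexp : 2 / p + 1 / q > 1) (hr : 1 / r = 1 / p + 1 / q)
    (π : ℕ → GridPartition 0 T) (hπ : IncreasingSeq π)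
    (X Y : ℝ → Fin d → ℝ) (Y' : ℝ → Fin d → Fin d → ℝ)
    (hX : MemVp p 0 T X) (hY : MemVp p 0 T Y) (hctrl : Controlled q r 0 T X Y Y') :
    Tendsto (fun n => ∑ i : Fin (π n).n,
      dot (X ((π n).t i.succ) - X ((π n).t i.castSucc))
          (Y ((π n).t i.succ) - Y ((π n).t i.castSucc)
            - mulVec' (Y' ((π n).t i.castSucc))
              (X ((π n).t i.succ) - X ((π n).t i.castSucc))))
      atTop (𝓝 0) := by
  have hp0 : (0:ℝ) < p := lt_of_lt_of_le one_pos hp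
  have hr0 : (0:ℝ) < r := by
    have h1 : 0 < 1 / r := by
      rw [hr]; positivity
    exact one_div_pos.mp h1
  -- the interpolation exponent
  set θ : ℝ := (max 0 (1 - 1/r) + 1/p) / 2 with hθdef
  have hmaxlt : max 0 (1 - 1/r) < 1/p := by
    refine max_lt (by positivity) ?_
    have : 1/p + 1/r > 1 := by
      rw [hr]
      have : 2/p = 1/p + 1/p := by ring
      linarith [this]
    linarith
  have hθpos : 0 < θ := by
    have : (0:ℝ) ≤ max 0 (1 - 1/r) := le_max_left _ _
    have h2 : (0:ℝ) < 1/p := by positivity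
    rw [hθdef]; linarith
  have hθlt : θ < 1/p := by
    rw [hθdef]; linarith [hmaxlt]
  have hθgt : 1 - 1/r < θ := by
    have h1 : 1 - 1/r ≤ max 0 (1 - 1/r) := le_max_right _ _
    rw [hθdef]; linarith [hmaxlt]
  have hθ1 : θ < 1 := lt_of_lt_of_le hθlt (by
    rw [div_le_one hp0]; exact hp)
  have hpθ : p * θ < 1 := by
    have := (mul_lt_mul_iff_right₀ hp0).mpr hθlt
    rwa [mul_one_div, div_self (ne_of_gt hp0)] at this
  have hrθ : r * (1 - θ) < 1 := by
    have h1 : 1 - θ < 1/r := by linarith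
    have := (mul_lt_mul_iff_right₀ hr0).mpr h1
    rwa [mul_one_div, div_self (ne_of_gt hr0)] at this
  set e1 : ℝ := 1 - p * θ with he1def
  set e2 : ℝ := 1 - r * (1 - θ) with he2def
  have he1 : 0 < e1 := by rw [he1def]; linarith
  have he2 : 0 < e2 := by rw [he2def]; linarith
  obtain ⟨MX, hMX⟩ := hX.2
  obtain ⟨MR, hMR⟩ := hctrl.2
  have hMXnn : 0 ≤ MX := le_trans (Finset.sum_nonneg fun i _ =>
    Real.rpow_nonneg (norm_nonneg _) _) (hMX (π 0))
  have hMRnn : 0 ≤ MR := le_trans (Finset.sum_nonneg fun i _ =>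
    Real.rpow_nonneg (norm_nonneg _) _) (hMR (π 0))
  obtain ⟨KX, hKX⟩ := isCompact_Icc.exists_bound_of_continuousOn hX.1
  have hKXnn : 0 ≤ KX := le_trans (norm_nonneg _) (hKX 0 ⟨le_refl _, hT.le⟩)
  set A0 : ℝ := 2 * KX + 1 with hA0def
  have hA0 : 0 < A0 := by rw [hA0def]; linarith
  obtain ⟨K, hK⟩ := isCompact_Icc.exists_bound_of_continuousOn hctrl.1.1
  have hKnn : 0 ≤ K := le_trans (norm_nonneg _) (hK 0 ⟨le_refl _, hT.le⟩)
  -- notation for the remainder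
  set R : ℝ → ℝ → (Fin d → ℝ) := fun s t => Y t - Y s - mulVec' (Y' s) (X t - X s) with hRdef
  -- supremum of remainder norms over the n-th partition
  set bsup : ℕ → ℝ := fun n => ⨆ i : Fin (π n).n,
      ‖R ((π n).t i.castSucc) ((π n).t i.succ)‖ with hbdef
  have hnonempty : ∀ n, Nonempty (Fin (π n).n) := fun n =>
    Fin.pos_iff_nonempty.mp ((π n).n_pos hT)
  have hble : ∀ n (i : Fin (π n).n),
      ‖R ((π n).t i.castSucc) ((π n).t i.succ)‖ ≤ bsup n := fun n i =>
    le_ciSup (f := fun i : Fin (π n).n => ‖R ((π n).t i.castSucc) ((π n).t i.succ)‖)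
      (Set.Finite.bddAbove (Set.finite_range _)) i
  have hbnn : ∀ n, 0 ≤ bsup n := fun n => Real.iSup_nonneg fun i => norm_nonneg _
  have haK : ∀ n (i : Fin (π n).n),
      ‖X ((π n).t i.succ) - X ((π n).t i.castSucc)‖ ≤ A0 := by
    intro n i
    calc ‖X ((π n).t i.succ) - X ((π n).t i.castSucc)‖
        ≤ ‖X ((π n).t i.succ)‖ + ‖X ((π n).t i.castSucc)‖ := norm_sub_le _ _
      _ ≤ KX + KX := add_le_add (hKX _ ((π n).t_mem _)) (hKX _ ((π n).t_mem _))
      _ ≤ A0 := by rw [hA0def]; linarith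
  -- bsup tends to 0
  have hbsup0 : Tendsto bsup atTop (𝓝 0) := by
    rw [Metric.tendsto_atTop]
    intro ε hε
    have hε2 : 0 < ε / 2 := by linarith
    have hε4 : 0 < ε / 4 := by linarith
    obtain ⟨δY, hδY, hUCY⟩ := exists_uc_delta' Y hY.1 hε4
    have hdK : (0:ℝ) < (d : ℝ) * K + 1 := by positivity
    have hεX : 0 < ε / 4 / ((d : ℝ) * K + 1) := by positivity
    obtain ⟨δX, hδX, hUCX⟩ := exists_uc_delta' X hX.1 hεX
    obtain ⟨N, hN⟩ := Metric.tendsto_atTop.1 hπ.2 (min δY δX) (lt_min hδY hδX)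
    refine ⟨N, fun n hn => ?_⟩
    have hmesh : (π n).mesh ≤ min δY δX := by
      have := hN n hn
      rw [Real.dist_eq, sub_zero] at this
      exact (le_abs_self _).trans this.le
    have hb : bsup n ≤ ε / 2 := by
      haveI := hnonempty n
      refine ciSup_le fun i => ?_
      have hstep : (π n).t i.succ - (π n).t i.castSucc ≤ min δY δX :=
        le_trans ((π n).diff_le_mesh i) hmesh
      have hgap : |(π n).t i.succ - (π n).t i.castSucc| ≤ min δY δX := by
        rw [abs_of_nonneg (sub_nonneg.mpr ((π n).mono (Fin.castSucc_le_succ i)))]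
        exact hstep
      have hYb : ‖Y ((π n).t i.succ) - Y ((π n).t i.castSucc)‖ ≤ ε / 4 :=
        hUCY _ ((π n).t_mem _) _ ((π n).t_mem _) (hgap.trans (min_le_left _ _))
      have hXb : ‖X ((π n).t i.succ) - X ((π n).t i.castSucc)‖ ≤ ε / 4 / ((d:ℝ) * K + 1) :=
        hUCX _ ((π n).t_mem _) _ ((π n).t_mem _) (hgap.trans (min_le_right _ _))
      have hmv : ‖mulVec' (Y' ((π n).t i.castSucc))
          (X ((π n).t i.succ) - X ((π n).t i.castSucc))‖ ≤ ε / 4 := by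
        calc ‖mulVec' (Y' ((π n).t i.castSucc))
              (X ((π n).t i.succ) - X ((π n).t i.castSucc))‖
            ≤ (d:ℝ) * (‖Y' ((π n).t i.castSucc)‖ *
              ‖X ((π n).t i.succ) - X ((π n).t i.castSucc)‖) := mulVec'_norm_le _ _
          _ ≤ ((d:ℝ) * K + 1) * (ε / 4 / ((d:ℝ) * K + 1)) := by
              have h1 : (d:ℝ) * (‖Y' ((π n).t i.castSucc)‖ *
                  ‖X ((π n).t i.succ) - X ((π n).t i.castSucc)‖) ≤
                  (d:ℝ) * (K * (ε / 4 / ((d:ℝ) * K + 1))) := by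
                refine mul_le_mul_of_nonneg_left ?_ (Nat.cast_nonneg d)
                exact mul_le_mul (hK _ ((π n).t_mem _)) hXb (norm_nonneg _) hKnn
              have h2 : (d:ℝ) * (K * (ε / 4 / ((d:ℝ) * K + 1))) ≤
                  ((d:ℝ) * K + 1) * (ε / 4 / ((d:ℝ) * K + 1)) := by
                have : (d:ℝ) * K ≤ (d:ℝ) * K + 1 := by linarith
                calc (d:ℝ) * (K * (ε / 4 / ((d:ℝ) * K + 1)))
                    = ((d:ℝ) * K) * (ε / 4 / ((d:ℝ) * K + 1)) := by ring
                  _ ≤ ((d:ℝ) * K + 1) * (ε / 4 / ((d:ℝ) * K + 1)) :=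
                    mul_le_mul_of_nonneg_right this hεX.le
              linarith
          _ = ε / 4 := by field_simp
      calc ‖R ((π n).t i.castSucc) ((π n).t i.succ)‖
          ≤ ‖Y ((π n).t i.succ) - Y ((π n).t i.castSucc)‖ +
            ‖mulVec' (Y' ((π n).t i.castSucc))
              (X ((π n).t i.succ) - X ((π n).t i.castSucc))‖ := norm_sub_le _ _
        _ ≤ ε / 4 + ε / 4 := add_le_add hYb hmv
        _ = ε / 2 := by ring
    rw [Real.dist_eq, sub_zero, abs_of_nonneg (hbnn n)]
    linarith
  -- the global bound
  have hbound : ∀ n, |∑ i : Fin (π n).n,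
      dot (X ((π n).t i.succ) - X ((π n).t i.castSucc))
        (R ((π n).t i.castSucc) ((π n).t i.succ))| ≤
      (d : ℝ) * ((θ * MX + (1 - θ) * MR) * (A0 ^ e1 * bsup n ^ e2)) := by
    intro n
    have hterm : ∀ i : Fin (π n).n,
        ‖X ((π n).t i.succ) - X ((π n).t i.castSucc)‖ *
        ‖R ((π n).t i.castSucc) ((π n).t i.succ)‖ ≤
        (θ * ‖X ((π n).t i.succ) - X ((π n).t i.castSucc)‖ ^ p +
         (1 - θ) * ‖R ((π n).t i.castSucc) ((π n).t i.succ)‖ ^ r) *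
        (A0 ^ e1 * bsup n ^ e2) := by
      intro i
      set a := ‖X ((π n).t i.succ) - X ((π n).t i.castSucc)‖ with hadef
      set b := ‖R ((π n).t i.castSucc) ((π n).t i.succ)‖ with hbdef2
      have han : 0 ≤ a := norm_nonneg _
      have hbn : 0 ≤ b := norm_nonneg _
      have hsplit : a * b = ((a ^ p) ^ θ * (b ^ r) ^ (1 - θ)) * (a ^ e1 * b ^ e2) := by
        have ha1 : a = a ^ (p * θ) * a ^ e1 := by
          rw [← Real.rpow_add' han (by rw [he1def]; ring_nf; norm_num)]
          rw [he1def]; ring_nf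
          exact (Real.rpow_one a).symm
        have hb1 : b = b ^ (r * (1 - θ)) * b ^ e2 := by
          rw [← Real.rpow_add' hbn (by rw [he2def]; ring_nf; norm_num)]
          rw [he2def]; ring_nf
          exact (Real.rpow_one b).symm
        calc a * b = (a ^ (p * θ) * a ^ e1) * (b ^ (r * (1 - θ)) * b ^ e2) := by
              rw [← ha1, ← hb1]
          _ = (a ^ (p * θ) * b ^ (r * (1 - θ))) * (a ^ e1 * b ^ e2) := by ring
          _ = ((a ^ p) ^ θ * (b ^ r) ^ (1 - θ)) * (a ^ e1 * b ^ e2) := by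
              rw [← Real.rpow_mul han, ← Real.rpow_mul hbn]
      rw [hsplit]
      have h1 : (a ^ p) ^ θ * (b ^ r) ^ (1 - θ) ≤ θ * a ^ p + (1 - θ) * b ^ r :=
        Real.geom_mean_le_arith_mean2_weighted hθpos.le (by linarith)
          (Real.rpow_nonneg han p) (Real.rpow_nonneg hbn r) (by ring)
      have h2 : a ^ e1 * b ^ e2 ≤ A0 ^ e1 * bsup n ^ e2 := by
        refine mul_le_mul (Real.rpow_le_rpow han (haK n i) he1.le)
          (Real.rpow_le_rpow hbn (hble n i) he2.le)
          (Real.rpow_nonneg hbn e2) (Real.rpow_nonneg hA0.le e1)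
      refine mul_le_mul h1 h2
        (mul_nonneg (Real.rpow_nonneg han _) (Real.rpow_nonneg hbn _))
        (add_nonneg (mul_nonneg hθpos.le (Real.rpow_nonneg han p))
          (mul_nonneg (by linarith) (Real.rpow_nonneg hbn r)))
    calc |∑ i : Fin (π n).n,
        dot (X ((π n).t i.succ) - X ((π n).t i.castSucc))
          (R ((π n).t i.castSucc) ((π n).t i.succ))|
        ≤ ∑ i : Fin (π n).n, |dot (X ((π n).t i.succ) - X ((π n).t i.castSucc))
          (R ((π n).t i.castSucc) ((π n).t i.succ))| := Finset.abs_sum_le_sum_abs _ _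
      _ ≤ ∑ i : Fin (π n).n, (d : ℝ) *
          ((θ * ‖X ((π n).t i.succ) - X ((π n).t i.castSucc)‖ ^ p +
            (1 - θ) * ‖R ((π n).t i.castSucc) ((π n).t i.succ)‖ ^ r) *
           (A0 ^ e1 * bsup n ^ e2)) := by
          refine Finset.sum_le_sum fun i _ => ?_
          refine le_trans (dot_abs_le _ _) ?_
          exact mul_le_mul_of_nonneg_left (hterm i) (Nat.cast_nonneg d)
      _ = (d : ℝ) * ((θ * (∑ i : Fin (π n).n,
              ‖X ((π n).t i.succ) - X ((π n).t i.castSucc)‖ ^ p) +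
            (1 - θ) * (∑ i : Fin (π n).n,
              ‖R ((π n).t i.castSucc) ((π n).t i.succ)‖ ^ r)) *
           (A0 ^ e1 * bsup n ^ e2)) := by
          rw [← Finset.mul_sum, ← Finset.sum_mul, Finset.sum_add_distrib,
            ← Finset.mul_sum, ← Finset.mul_sum]
      _ ≤ (d : ℝ) * ((θ * MX + (1 - θ) * MR) * (A0 ^ e1 * bsup n ^ e2)) := by
          refine mul_le_mul_of_nonneg_left ?_ (Nat.cast_nonneg d)
          refine mul_le_mul_of_nonneg_right ?_
            (mul_nonneg (Real.rpow_nonneg hA0.le _) (Real.rpow_nonneg (hbnn n) _))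
          refine add_le_add ?_ ?_
          · exact mul_le_mul_of_nonneg_left (hMX (π n)) hθpos.le
          · exact mul_le_mul_of_nonneg_left (hMR (π n)) (by linarith)
  -- conclude by squeezing
  have h0 : Tendsto (fun n => bsup n ^ e2) atTop (𝓝 0) := by
    have hc := (Real.continuousAt_rpow_const 0 e2 (Or.inr he2.le)).tendsto
    have h1 := hc.comp hbsup0
    rwa [Real.zero_rpow (ne_of_gt he2)] at h1
  have htend : Tendsto (fun n =>
      ((d : ℝ) * ((θ * MX + (1 - θ) * MR) * A0 ^ e1)) * bsup n ^ e2) atTop (𝓝 0) := by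
    have := h0.const_mul ((d : ℝ) * ((θ * MX + (1 - θ) * MR) * A0 ^ e1))
    simpa using this
  refine squeeze_zero_norm (fun n => ?_) htend
  · have hb := hbound n
    rw [Real.norm_eq_abs]
    calc |∑ i : Fin (π n).n,
        dot (X ((π n).t i.succ) - X ((π n).t i.castSucc))
          (Y ((π n).t i.succ) - Y ((π n).t i.castSucc)
            - mulVec' (Y' ((π n).t i.castSucc))
              (X ((π n).t i.succ) - X ((π n).t i.castSucc)))|
        = |∑ i : Fin (π n).n,
          dot (X ((π n).t i.succ) - X ((π n).t i.castSucc))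
            (R ((π n).t i.castSucc) ((π n).t i.succ))| := rfl
      _ ≤ (d : ℝ) * ((θ * MX + (1 - θ) * MR) * (A0 ^ e1 * bsup n ^ e2)) := hb
      _ = ((d : ℝ) * ((θ * MX + (1 - θ) * MR) * A0 ^ e1)) * bsup n ^ e2 := by ring

lemma dot_sub_right {d : ℕ} (x u v : Fin d → ℝ) : dot x (u - v) = dot x u - dot x v := by
  unfold dot
  rw [← Finset.sum_sub_distrib]
  exact Finset.sum_congr rfl fun i _ => by simp [Pi.sub_apply]; ring

lemma dot_mulVec' {d : ℕ} (A : Fin d → Fin d → ℝ) (x : Fin d → ℝ) :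
    dot x (mulVec' A x) = ∑ a, ∑ b, A a b * (x a * x b) := by
  unfold dot mulVec'
  refine Finset.sum_congr rfl fun a _ => ?_
  rw [Finset.mul_sum]
  exact Finset.sum_congr rfl fun b _ => by ring


end Aux

/-- existence of the quadratic covariation `[Y,X]_T` for a
controlled path `Y ∈ C_X^q`, and its representation as
`Σ_{i,j} ∫_0^T Y'(i,j) d[X^i,X^j]` (the Riemann–Stieltjes integrals being limits
of Riemann sums along the partition sequence). -/
theorem quadratic_covariation_of_controlled {d : ℕ} (T p q r : ℝ) (hT : 0 < T)
    (hp : 1 ≤ p) (hq : 0 < q) (hexp : 2 / p + 1 / q > 1) (hr : 1 / r = 1 / p + 1 / q)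
    (π : ℕ → GridPartition 0 T) (hπ : IncreasingSeq π)
    (X Y : ℝ → Fin d → ℝ) (Y' : ℝ → Fin d → Fin d → ℝ)
    (hX : MemVp p 0 T X) (hY : MemVp p 0 T Y)
    (hctrl : Controlled q r 0 T X Y Y')
    (Q : Fin d → ℝ → ℝ) (QS : Fin d → Fin d → ℝ → ℝ)
    (hQ : ∀ i, HasQV π (fun t => X t i) (Q i))
    (hQS : ∀ i j, HasQV π (fun t => X t i + X t j) (QS i j)) :
    ∃ I : Fin d → Fin d → ℝ,
      (∀ i j : Fin d,
        Tendsto (fun n => (π n).rsum (fun s t =>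
            Y' s i j * ((QS i j t - Q i t - Q j t) / 2 -
              (QS i j s - Q i s - Q j s) / 2)))
          atTop (𝓝 (I i j))) ∧
      Tendsto (fun n => (π n).rsum (fun s t => dot (X t - X s) (Y t - Y s)))
        atTop (𝓝 (∑ i, ∑ j, I i j)) := by
  have hY'c : ∀ i j : Fin d, ContinuousOn (fun s => Y' s i j) (Set.Icc 0 T) := by
    intro i j
    exact ((continuous_apply j).comp (continuous_apply i)).comp_continuousOn hctrl.1.1
  have h1 : ∀ i j : Fin d, ∃ L : ℝ,
      Tendsto (fun m => ∑ k : Fin (π m).n, (fun s => Y' s i j) ((π m).t k.castSucc) *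
        (QS i j ((π m).t k.succ) - QS i j ((π m).t k.castSucc))) atTop (𝓝 L) ∧
      Tendsto (fun n => ∑ k : Fin (π n).n, (fun s => Y' s i j) ((π n).t k.castSucc) *
        ((fun t => X t i + X t j) ((π n).t k.succ) -
         (fun t => X t i + X t j) ((π n).t k.castSucc))^2) atTop (𝓝 L) :=
    fun i j => converge_core hT π hπ (fun t => X t i + X t j) (QS i j)
      (fun s => Y' s i j) (hQS i j) (hY'c i j)
  have h2 : ∀ i j : Fin d, ∃ L : ℝ,
      Tendsto (fun m => ∑ k : Fin (π m).n, (fun s => Y' s i j) ((π m).t k.castSucc) *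
        (Q i ((π m).t k.succ) - Q i ((π m).t k.castSucc))) atTop (𝓝 L) ∧
      Tendsto (fun n => ∑ k : Fin (π n).n, (fun s => Y' s i j) ((π n).t k.castSucc) *
        ((fun t => X t i) ((π n).t k.succ) -
         (fun t => X t i) ((π n).t k.castSucc))^2) atTop (𝓝 L) :=
    fun i j => converge_core hT π hπ (fun t => X t i) (Q i)
      (fun s => Y' s i j) (hQ i) (hY'c i j)
  have h3 : ∀ i j : Fin d, ∃ L : ℝ,
      Tendsto (fun m => ∑ k : Fin (π m).n, (fun s => Y' s i j) ((π m).t k.castSucc) *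
        (Q j ((π m).t k.succ) - Q j ((π m).t k.castSucc))) atTop (𝓝 L) ∧
      Tendsto (fun n => ∑ k : Fin (π n).n, (fun s => Y' s i j) ((π n).t k.castSucc) *
        ((fun t => X t j) ((π n).t k.succ) -
         (fun t => X t j) ((π n).t k.castSucc))^2) atTop (𝓝 L) :=
    fun i j => converge_core hT π hπ (fun t => X t j) (Q j)
      (fun s => Y' s i j) (hQ j) (hY'c i j)
  choose L1 hL1V hL1W using h1
  choose L2 hL2V hL2W using h2
  choose L3 hL3V hL3W using h3
  refine ⟨fun i j => (L1 i j - L2 i j - L3 i j) / 2, ?_, ?_⟩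
  · intro i j
    have heq : (fun n => (π n).rsum (fun s t =>
        Y' s i j * ((QS i j t - Q i t - Q j t) / 2 - (QS i j s - Q i s - Q j s) / 2)))
        = fun n =>
          ((∑ k : Fin (π n).n, Y' ((π n).t k.castSucc) i j *
              (QS i j ((π n).t k.succ) - QS i j ((π n).t k.castSucc)))
          - (∑ k : Fin (π n).n, Y' ((π n).t k.castSucc) i j *
              (Q i ((π n).t k.succ) - Q i ((π n).t k.castSucc)))
          - (∑ k : Fin (π n).n, Y' ((π n).t k.castSucc) i j *
              (Q j ((π n).t k.succ) - Q j ((π n).t k.castSucc)))) / 2 := by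
      funext n
      unfold GridPartition.rsum
      rw [← Finset.sum_sub_distrib, ← Finset.sum_sub_distrib, Finset.sum_div]
      exact Finset.sum_congr rfl fun k _ => by ring
    rw [heq]
    exact (((hL1V i j).sub (hL2V i j)).sub (hL3V i j)).div_const 2
  · have hE := remainder_tendsto hT hp hq hexp hr π hπ X Y Y' hX hY hctrl
    have main_eq : ∀ n, (π n).rsum (fun s t => dot (X t - X s) (Y t - Y s)) =
        (∑ a : Fin d, ∑ b : Fin d,
          ((∑ k : Fin (π n).n, Y' ((π n).t k.castSucc) a b *
              ((X ((π n).t k.succ) a + X ((π n).t k.succ) b) -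
               (X ((π n).t k.castSucc) a + X ((π n).t k.castSucc) b))^2)
          - (∑ k : Fin (π n).n, Y' ((π n).t k.castSucc) a b *
              (X ((π n).t k.succ) a - X ((π n).t k.castSucc) a)^2)
          - (∑ k : Fin (π n).n, Y' ((π n).t k.castSucc) a b *
              (X ((π n).t k.succ) b - X ((π n).t k.castSucc) b)^2)) / 2)
        + ∑ k : Fin (π n).n,
            dot (X ((π n).t k.succ) - X ((π n).t k.castSucc))
              (Y ((π n).t k.succ) - Y ((π n).t k.castSucc)
                - mulVec' (Y' ((π n).t k.castSucc))
                  (X ((π n).t k.succ) - X ((π n).t k.castSucc))) := by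
      intro n
      unfold GridPartition.rsum
      have hk : ∀ k : Fin (π n).n,
          dot (X ((π n).t k.succ) - X ((π n).t k.castSucc))
            (Y ((π n).t k.succ) - Y ((π n).t k.castSucc))
          = (∑ a : Fin d, ∑ b : Fin d, Y' ((π n).t k.castSucc) a b *
              ((X ((π n).t k.succ) - X ((π n).t k.castSucc)) a *
               (X ((π n).t k.succ) - X ((π n).t k.castSucc)) b))
            + dot (X ((π n).t k.succ) - X ((π n).t k.castSucc))
              (Y ((π n).t k.succ) - Y ((π n).t k.castSucc)
                - mulVec' (Y' ((π n).t k.castSucc))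
                  (X ((π n).t k.succ) - X ((π n).t k.castSucc))) := by
        intro k
        simp only [dot_sub_right]
        rw [← dot_mulVec']
        ring
      calc ∑ k : Fin (π n).n,
            dot (X ((π n).t k.succ) - X ((π n).t k.castSucc))
              (Y ((π n).t k.succ) - Y ((π n).t k.castSucc))
          = ∑ k : Fin (π n).n,
            ((∑ a : Fin d, ∑ b : Fin d, Y' ((π n).t k.castSucc) a b *
              ((X ((π n).t k.succ) - X ((π n).t k.castSucc)) a *
               (X ((π n).t k.succ) - X ((π n).t k.castSucc)) b))
            + dot (X ((π n).t k.succ) - X ((π n).t k.castSucc))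
              (Y ((π n).t k.succ) - Y ((π n).t k.castSucc)
                - mulVec' (Y' ((π n).t k.castSucc))
                  (X ((π n).t k.succ) - X ((π n).t k.castSucc)))) :=
            Finset.sum_congr rfl fun k _ => hk k
        _ = (∑ k : Fin (π n).n, ∑ a : Fin d, ∑ b : Fin d, Y' ((π n).t k.castSucc) a b *
              ((X ((π n).t k.succ) - X ((π n).t k.castSucc)) a *
               (X ((π n).t k.succ) - X ((π n).t k.castSucc)) b))
            + ∑ k : Fin (π n).n,
              dot (X ((π n).t k.succ) - X ((π n).t k.castSucc))
                (Y ((π n).t k.succ) - Y ((π n).t k.castSucc)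
                  - mulVec' (Y' ((π n).t k.castSucc))
                    (X ((π n).t k.succ) - X ((π n).t k.castSucc))) :=
            Finset.sum_add_distrib
        _ = _ := by
            congr 1
            rw [Finset.sum_comm]
            refine Finset.sum_congr rfl fun a _ => ?_
            rw [Finset.sum_comm]
            refine Finset.sum_congr rfl fun b _ => ?_
            rw [← Finset.sum_sub_distrib, ← Finset.sum_sub_distrib, Finset.sum_div]
            refine Finset.sum_congr rfl fun k _ => ?_
            simp only [Pi.sub_apply]
            ring
    have hfun : (fun n => (π n).rsum (fun s t => dot (X t - X s) (Y t - Y s)))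
        = fun n =>
        (∑ a : Fin d, ∑ b : Fin d,
          ((∑ k : Fin (π n).n, Y' ((π n).t k.castSucc) a b *
              ((X ((π n).t k.succ) a + X ((π n).t k.succ) b) -
               (X ((π n).t k.castSucc) a + X ((π n).t k.castSucc) b))^2)
          - (∑ k : Fin (π n).n, Y' ((π n).t k.castSucc) a b *
              (X ((π n).t k.succ) a - X ((π n).t k.castSucc) a)^2)
          - (∑ k : Fin (π n).n, Y' ((π n).t k.castSucc) a b *
              (X ((π n).t k.succ) b - X ((π n).t k.castSucc) b)^2)) / 2)
        + ∑ k : Fin (π n).n,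
            dot (X ((π n).t k.succ) - X ((π n).t k.castSucc))
              (Y ((π n).t k.succ) - Y ((π n).t k.castSucc)
                - mulVec' (Y' ((π n).t k.castSucc))
                  (X ((π n).t k.succ) - X ((π n).t k.castSucc))) := funext main_eq
    rw [hfun]
    have hsum : Tendsto (fun n => ∑ a : Fin d, ∑ b : Fin d,
        ((∑ k : Fin (π n).n, Y' ((π n).t k.castSucc) a b *
            ((X ((π n).t k.succ) a + X ((π n).t k.succ) b) -
             (X ((π n).t k.castSucc) a + X ((π n).t k.castSucc) b))^2)
        - (∑ k : Fin (π n).n, Y' ((π n).t k.castSucc) a b *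
            (X ((π n).t k.succ) a - X ((π n).t k.castSucc) a)^2)
        - (∑ k : Fin (π n).n, Y' ((π n).t k.castSucc) a b *
            (X ((π n).t k.succ) b - X ((π n).t k.castSucc) b)^2)) / 2)
        atTop (𝓝 (∑ a : Fin d, ∑ b : Fin d, (L1 a b - L2 a b - L3 a b) / 2)) := by
      refine tendsto_finset_sum _ fun a _ => ?_
      refine tendsto_finset_sum _ fun b _ => ?_
      exact (((hL1W a b).sub (hL2W a b)).sub (hL3W a b)).div_const 2
    have := hsum.add hE
    simpa using this
end

section
/- Let 1 ≤ p < 3, X ∈ V^p([0,T], R^d), and F ∈ C²(R^d, R) with D²F being α-Hölder continuous for some α > max{p−2, 0}. Then the Stratonovich integral ∫_0^T DF(X_t) ∘ dX_t := lim_{|π|→0} Σ_{[s,t]∈π} ⟨DF(X_s) + ½(DF(X_t)−DF(X_s)), X_t−X_s⟩ exists and equals F(X_T) − F(X_0). -/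
open Finset Filter Topology

private lemma telescope_sum : ∀ {n : ℕ} (t : Fin (n + 1) → ℝ) (G : ℝ → ℝ),
    ∑ i : Fin n, (G (t i.succ) - G (t i.castSucc)) = G (t (Fin.last n)) - G (t 0) := by
  intro n
  induction n with
  | zero => intro t G; simp
  | succ n ih =>
    intro t G
    rw [Fin.sum_univ_castSucc]
    have h := ih (fun j => t j.castSucc) G
    simp only [Fin.succ_castSucc] at h ⊢
    rw [h, Fin.succ_last]
    simp only [Fin.castSucc_zero]
    ring

private lemma trapezoid {d : ℕ} {F : (Fin d → ℝ) → ℝ} (hF : ContDiff ℝ 2 F) {α C : ℝ}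
    (hα : 0 < α) (hC : 0 ≤ C)
    (hH : ∀ x y : Fin d → ℝ,
      ‖iteratedFDeriv ℝ 2 F x - iteratedFDeriv ℝ 2 F y‖ ≤ C * ‖x - y‖ ^ α)
    (x y : Fin d → ℝ) :
    |F y - F x - (fderiv ℝ F x (y - x) +
        (1 / 2) * (fderiv ℝ F y (y - x) - fderiv ℝ F x (y - x)))|
      ≤ C * ‖y - x‖ ^ (2 + α) := by
  set v : Fin d → ℝ := y - x with hv
  by_cases hv0 : v = 0
  · have hxy : y = x := by rwa [sub_eq_zero] at hv0
    subst hxy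
    rw [hv0]
    simp [Real.zero_rpow (by linarith : (2:ℝ) + α ≠ 0)]
  have hvpos : 0 < ‖v‖ := norm_pos_iff.mpr hv0
  set K : ℝ := C * ‖v‖ ^ (2 + α) with hK
  have hK0 : 0 ≤ K := by positivity
  have hFd : Differentiable ℝ F := hF.differentiable (by norm_num)
  have hDFd : Differentiable ℝ (fderiv ℝ F) :=
    (hF.fderiv_right (m := 1) (by norm_num)).differentiable one_ne_zero
  have hγ : ∀ u : ℝ, HasDerivAt (fun s : ℝ => x + s • v) v u := by
    intro u
    simpa using ((hasDerivAt_id u).smul_const v).const_add x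
  have hf1 : ∀ u : ℝ, HasDerivAt (fun s : ℝ => F (x + s • v)) (fderiv ℝ F (x + u • v) v) u := by
    intro u
    exact (hFd (x + u • v)).hasFDerivAt.comp_hasDerivAt u (hγ u)
  have hf2 : ∀ u : ℝ, HasDerivAt (fun s : ℝ => fderiv ℝ F (x + s • v) v)
      (fderiv ℝ (fderiv ℝ F) (x + u • v) v v) u := by
    intro u
    have h0 : HasDerivAt (fun s : ℝ => fderiv ℝ F (x + s • v)) (fderiv ℝ (fderiv ℝ F) (x + u • v) v) u :=
      (hDFd (x + u • v)).hasFDerivAt.comp_hasDerivAt u (hγ u)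
    have h := h0.clm_apply (hasDerivAt_const u v)
    simpa [Function.comp] using h
  have hvpow : ‖v‖ ^ α * (‖v‖ * ‖v‖) = ‖v‖ ^ (2 + α) := by
    rw [Real.rpow_add hvpos 2 α]
    have h2 : ‖v‖ ^ (2:ℝ) = ‖v‖ * ‖v‖ := by
      rw [show (2:ℝ) = ((2:ℕ):ℝ) by norm_num, Real.rpow_natCast]; ring
    rw [h2]; ring
  have happly : ∀ a b : Fin d → ℝ,
      |fderiv ℝ (fderiv ℝ F) a v v - fderiv ℝ (fderiv ℝ F) b v v|
        ≤ C * ‖a - b‖ ^ α * (‖v‖ * ‖v‖) := by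
    intro a b
    have e : ∀ z, fderiv ℝ (fderiv ℝ F) z v v = iteratedFDeriv ℝ 2 F z ![v, v] := by
      intro z; rw [iteratedFDeriv_two_apply]; simp
    rw [e a, e b]
    have h1 : iteratedFDeriv ℝ 2 F a ![v,v] - iteratedFDeriv ℝ 2 F b ![v,v]
        = (iteratedFDeriv ℝ 2 F a - iteratedFDeriv ℝ 2 F b) ![v,v] := by simp
    rw [h1]
    calc |(iteratedFDeriv ℝ 2 F a - iteratedFDeriv ℝ 2 F b) ![v,v]|
        ≤ ‖iteratedFDeriv ℝ 2 F a - iteratedFDeriv ℝ 2 F b‖ * ∏ i : Fin 2, ‖![v,v] i‖ :=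
          (iteratedFDeriv ℝ 2 F a - iteratedFDeriv ℝ 2 F b).le_opNorm _
      _ ≤ C * ‖a - b‖ ^ α * (‖v‖ * ‖v‖) := by
          have hp : ∏ i : Fin 2, ‖![v,v] i‖ = ‖v‖ * ‖v‖ := by
            simp [Fin.prod_univ_two]
          rw [hp]
          exact mul_le_mul_of_nonneg_right (hH a b) (by positivity)
  -- inner mean value estimate
  have key : ∀ u ∈ Set.Icc (0:ℝ) 1,
      |fderiv ℝ F (x + u • v) v - fderiv ℝ F x v
        - u * (fderiv ℝ (fderiv ℝ F) (x + u • v) v v)| ≤ K * u := by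
    intro u hu
    set c : ℝ := fderiv ℝ (fderiv ℝ F) (x + u • v) v v with hc
    have hmvt := Convex.norm_image_sub_le_of_norm_hasDerivWithin_le
      (f := fun s : ℝ => fderiv ℝ F (x + s • v) v - s * c)
      (f' := fun s : ℝ => fderiv ℝ (fderiv ℝ F) (x + s • v) v v - c)
      (s := Set.Icc (0:ℝ) 1) (C := K) ?hderiv ?hbound (convex_Icc 0 1)
      (Set.left_mem_Icc.mpr zero_le_one) hu
    case hderiv =>
      intro s _
      exact ((hf2 s).sub (by simpa using (hasDerivAt_id s).mul_const c)).hasDerivWithinAt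
    case hbound =>
      intro s hs
      have hsu : |s - u| ≤ 1 := by
        rw [abs_le]
        constructor
        · linarith [hs.1, hu.2]
        · linarith [hs.2, hu.1]
      have hγdiff : (x + s • v) - (x + u • v) = (s - u) • v := by
        rw [sub_smul]; abel
      calc ‖fderiv ℝ (fderiv ℝ F) (x + s • v) v v - c‖
          ≤ C * ‖(x + s • v) - (x + u • v)‖ ^ α * (‖v‖ * ‖v‖) := happly _ _
        _ = C * (|s - u| ^ α * ‖v‖ ^ α) * (‖v‖ * ‖v‖) := by
            rw [hγdiff, norm_smul, Real.norm_eq_abs,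
              Real.mul_rpow (abs_nonneg _) (norm_nonneg _)]
        _ ≤ C * (1 * ‖v‖ ^ α) * (‖v‖ * ‖v‖) := by
            gcongr
            exact Real.rpow_le_one (abs_nonneg _) hsu hα.le
        _ = K := by rw [one_mul, hK, mul_assoc, hvpow]
    simp only [zero_smul, add_zero, zero_mul, sub_zero] at hmvt
    rw [Real.norm_eq_abs u, abs_of_nonneg hu.1] at hmvt
    calc |fderiv ℝ F (x + u • v) v - fderiv ℝ F x v - u * c|
        = |fderiv ℝ F (x + u • v) v - u * c - fderiv ℝ F x v| := by ring_nf
      _ ≤ K * u := hmvt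
  -- outer mean value estimate
  have hg : ∀ s : ℝ, HasDerivAt
      (fun s : ℝ => F (x + s • v) - F x
        - (s / 2) * (fderiv ℝ F x v + fderiv ℝ F (x + s • v) v))
      (fderiv ℝ F (x + s • v) v - ((1/2) * (fderiv ℝ F x v + fderiv ℝ F (x + s • v) v)
        + (s / 2) * (fderiv ℝ (fderiv ℝ F) (x + s • v) v v))) s := by
    intro s
    have h2 : HasDerivAt (fun s : ℝ => s / 2) (1/2 : ℝ) s := by
      simpa using (hasDerivAt_id s).div_const 2
    exact ((hf1 s).sub_const (F x)).sub (h2.mul ((hf2 s).const_add (fderiv ℝ F x v)))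
  have hgb : ∀ u ∈ Set.Icc (0:ℝ) 1,
      ‖fderiv ℝ F (x + u • v) v - ((1/2) * (fderiv ℝ F x v + fderiv ℝ F (x + u • v) v)
        + (u / 2) * (fderiv ℝ (fderiv ℝ F) (x + u • v) v v))‖ ≤ K := by
    intro u hu
    have hk := key u hu
    have he : fderiv ℝ F (x + u • v) v - ((1/2) * (fderiv ℝ F x v + fderiv ℝ F (x + u • v) v)
        + (u / 2) * (fderiv ℝ (fderiv ℝ F) (x + u • v) v v))
        = (1/2) * (fderiv ℝ F (x + u • v) v - fderiv ℝ F x v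
          - u * (fderiv ℝ (fderiv ℝ F) (x + u • v) v v)) := by ring
    rw [Real.norm_eq_abs, he, abs_mul]
    have h12 : |(1/2 : ℝ)| = 1/2 := by norm_num
    rw [h12]
    nlinarith [hu.1, hu.2, hK0, abs_nonneg (fderiv ℝ F (x + u • v) v - fderiv ℝ F x v
      - u * (fderiv ℝ (fderiv ℝ F) (x + u • v) v v))]
  have hmvt2 := Convex.norm_image_sub_le_of_norm_hasDerivWithin_le
    (f := fun s : ℝ => F (x + s • v) - F x
      - (s / 2) * (fderiv ℝ F x v + fderiv ℝ F (x + s • v) v))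
    (f' := fun s : ℝ => fderiv ℝ F (x + s • v) v
      - ((1/2) * (fderiv ℝ F x v + fderiv ℝ F (x + s • v) v)
        + (s / 2) * (fderiv ℝ (fderiv ℝ F) (x + s • v) v v)))
    (s := Set.Icc (0:ℝ) 1) (C := K)
    (fun s _ => (hg s).hasDerivWithinAt) hgb (convex_Icc 0 1)
    (Set.left_mem_Icc.mpr zero_le_one) (Set.right_mem_Icc.mpr zero_le_one)
  have hxy' : x + v = y := by rw [hv]; abel
  simp only [one_smul, zero_smul, add_zero, zero_div, zero_mul, sub_zero, sub_self,
    norm_one, mul_one] at hmvt2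
  rw [hxy'] at hmvt2
  calc |F y - F x - (fderiv ℝ F x v +
        (1 / 2) * (fderiv ℝ F y v - fderiv ℝ F x v))|
      = |F y - F x - 1 / 2 * (fderiv ℝ F x v + fderiv ℝ F y v)| := by ring_nf
    _ ≤ K := by rw [← Real.norm_eq_abs]; exact hmvt2

/-- for `X` of finite `p`-variation (`1 ≤ p < 3`) and `F ∈ C²` with
`α`-Hölder Hessian (`α > max{p−2,0}`), the Stratonovich integral
`∫ DF(X) ∘ dX` exists and equals `F(X_T) − F(X_0)`. -/
theorem stratonovich_gradient_integral {d : ℕ} (T p α : ℝ) (hT : 0 < T)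
    (hp : 1 ≤ p) (hp3 : p < 3) (hα : α > max (p - 2) 0)
    (X : ℝ → Fin d → ℝ) (hX : MemVp p 0 T X)
    (F : (Fin d → ℝ) → ℝ) (hF : ContDiff ℝ 2 F)
    (hHolder : ∃ C : ℝ, ∀ x y : Fin d → ℝ,
      ‖iteratedFDeriv ℝ 2 F x - iteratedFDeriv ℝ 2 F y‖ ≤ C * ‖x - y‖ ^ α) :
    RiemannLimit 0 T
      (fun s t => fderiv ℝ F (X s) (X t - X s) +
        (1 / 2) * (fderiv ℝ F (X t) (X t - X s) - fderiv ℝ F (X s) (X t - X s)))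
      (F (X T) - F (X 0)) := by
  intro ε hε
  obtain ⟨hXc, M, hM⟩ := hX
  obtain ⟨C, hC⟩ := hHolder
  set C' : ℝ := max C 0 with hC'def
  have hC'0 : 0 ≤ C' := le_max_right _ _
  have hH' : ∀ x y : Fin d → ℝ,
      ‖iteratedFDeriv ℝ 2 F x - iteratedFDeriv ℝ 2 F y‖ ≤ C' * ‖x - y‖ ^ α := by
    intro x y
    exact le_trans (hC x y)
      (mul_le_mul_of_nonneg_right (le_max_left _ _) (by positivity))
  set M' : ℝ := max M 0 with hM'def
  have hM'0 : 0 ≤ M' := le_max_right _ _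
  have hα0 : 0 < α := lt_of_le_of_lt (le_max_right (p - 2) 0) hα
  have hαp : p - 2 < α := lt_of_le_of_lt (le_max_left (p - 2) 0) hα
  set β : ℝ := 2 + α - p with hβdef
  have hβ : 0 < β := by simp only [hβdef]; linarith
  set η : ℝ := min 1 ((ε / (C' * M' + 1)) ^ (1 / β)) with hηdef
  have hden : 0 < C' * M' + 1 := by positivity
  have hη0 : 0 < η := lt_min one_pos (Real.rpow_pos_of_pos (div_pos hε hden) _)
  have hηβ : η ^ β ≤ ε / (C' * M' + 1) := by
    have h1 : η ^ β ≤ ((ε / (C' * M' + 1)) ^ (1 / β)) ^ β :=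
      Real.rpow_le_rpow hη0.le (min_le_right _ _) hβ.le
    rwa [← Real.rpow_mul (le_of_lt (div_pos hε hden)), one_div,
      inv_mul_cancel₀ hβ.ne', Real.rpow_one] at h1
  -- uniform continuity
  have hu := (isCompact_Icc (a := (0:ℝ)) (b := T)).uniformContinuousOn_of_continuous hXc
  rw [Metric.uniformContinuousOn_iff] at hu
  obtain ⟨δ, hδ0, hδ⟩ := hu η hη0
  refine ⟨δ, hδ0, fun π hmesh => ?_⟩
  have hmem : ∀ j : Fin (π.n + 1), π.t j ∈ Set.Icc (0:ℝ) T := fun j =>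
    ⟨π.first.symm.trans_le (π.mono (Fin.zero_le j)),
     (π.mono (Fin.le_last j)).trans_eq π.last⟩
  have hsmall : ∀ i : Fin π.n, ‖X (π.t i.succ) - X (π.t i.castSucc)‖ ≤ η := by
    intro i
    have hle : π.t i.succ - π.t i.castSucc ≤ π.mesh :=
      le_ciSup (f := fun i : Fin π.n => π.t i.succ - π.t i.castSucc)
        (Set.finite_range _).bddAbove i
    have hd : dist (π.t i.succ) (π.t i.castSucc) < δ := by
      rw [Real.dist_eq, abs_of_nonneg (sub_nonneg.mpr (π.mono (Fin.castSucc_lt_succ (i := i)).le))]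
      exact lt_of_le_of_lt hle hmesh
    have := hδ _ (hmem i.succ) _ (hmem i.castSucc) hd
    rw [dist_eq_norm] at this
    exact this.le
  -- telescoping
  have htel : ∑ i : Fin π.n, (F (X (π.t i.succ)) - F (X (π.t i.castSucc)))
      = F (X T) - F (X 0) := by
    have h := telescope_sum π.t (fun r => F (X r))
    rwa [π.first, π.last] at h
  have hsplit : π.rsum (fun s t => fderiv ℝ F (X s) (X t - X s) +
        (1 / 2) * (fderiv ℝ F (X t) (X t - X s) - fderiv ℝ F (X s) (X t - X s)))
      - (F (X T) - F (X 0))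
      = ∑ i : Fin π.n,
        ((fderiv ℝ F (X (π.t i.castSucc)) (X (π.t i.succ) - X (π.t i.castSucc)) +
          (1 / 2) * (fderiv ℝ F (X (π.t i.succ)) (X (π.t i.succ) - X (π.t i.castSucc)) -
            fderiv ℝ F (X (π.t i.castSucc)) (X (π.t i.succ) - X (π.t i.castSucc))))
          - (F (X (π.t i.succ)) - F (X (π.t i.castSucc)))) := by
    rw [GridPartition.rsum, ← htel, ← Finset.sum_sub_distrib]
  rw [hsplit]
  -- termwise bound
  have hterm : ∀ i : Fin π.n,
      ‖(fderiv ℝ F (X (π.t i.castSucc)) (X (π.t i.succ) - X (π.t i.castSucc)) +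
          (1 / 2) * (fderiv ℝ F (X (π.t i.succ)) (X (π.t i.succ) - X (π.t i.castSucc)) -
            fderiv ℝ F (X (π.t i.castSucc)) (X (π.t i.succ) - X (π.t i.castSucc))))
          - (F (X (π.t i.succ)) - F (X (π.t i.castSucc)))‖
        ≤ C' * η ^ β * ‖X (π.t i.succ) - X (π.t i.castSucc)‖ ^ p := by
    intro i
    set xs := X (π.t i.castSucc)
    set xt := X (π.t i.succ)
    have htrap := trapezoid hF hα0 hC'0 hH' xs xt
    have h1 : ‖(fderiv ℝ F xs (xt - xs) +
          (1 / 2) * (fderiv ℝ F xt (xt - xs) - fderiv ℝ F xs (xt - xs)))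
          - (F xt - F xs)‖
        ≤ C' * ‖xt - xs‖ ^ (2 + α) := by
      rw [Real.norm_eq_abs, abs_sub_comm]
      exact htrap
    refine le_trans h1 ?_
    rcases eq_or_lt_of_le (norm_nonneg (xt - xs)) with hr | hr
    · rw [← hr, Real.zero_rpow (by linarith : (2:ℝ) + α ≠ 0), mul_zero]
      positivity
    · have hsplit2 : ‖xt - xs‖ ^ ((2:ℝ) + α) = ‖xt - xs‖ ^ β * ‖xt - xs‖ ^ p := by
        rw [← Real.rpow_add hr, hβdef]; ring_nf
      rw [hsplit2, ← mul_assoc]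
      gcongr
      exact hsmall i
  calc ‖∑ i : Fin π.n,
        ((fderiv ℝ F (X (π.t i.castSucc)) (X (π.t i.succ) - X (π.t i.castSucc)) +
          (1 / 2) * (fderiv ℝ F (X (π.t i.succ)) (X (π.t i.succ) - X (π.t i.castSucc)) -
            fderiv ℝ F (X (π.t i.castSucc)) (X (π.t i.succ) - X (π.t i.castSucc))))
          - (F (X (π.t i.succ)) - F (X (π.t i.castSucc))))‖
      ≤ ∑ i : Fin π.n, ‖(fderiv ℝ F (X (π.t i.castSucc)) (X (π.t i.succ) - X (π.t i.castSucc)) +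
          (1 / 2) * (fderiv ℝ F (X (π.t i.succ)) (X (π.t i.succ) - X (π.t i.castSucc)) -
            fderiv ℝ F (X (π.t i.castSucc)) (X (π.t i.succ) - X (π.t i.castSucc))))
          - (F (X (π.t i.succ)) - F (X (π.t i.castSucc)))‖ := norm_sum_le _ _
    _ ≤ ∑ i : Fin π.n, C' * η ^ β * ‖X (π.t i.succ) - X (π.t i.castSucc)‖ ^ p :=
        Finset.sum_le_sum fun i _ => hterm i
    _ = C' * η ^ β * ∑ i : Fin π.n, ‖X (π.t i.succ) - X (π.t i.castSucc)‖ ^ p := by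
        rw [Finset.mul_sum]
    _ ≤ C' * η ^ β * M' := by
        have hηβ0 : 0 ≤ C' * η ^ β := by positivity
        exact mul_le_mul_of_nonneg_left (le_trans (hM π) (le_max_left _ _)) hηβ0
    _ ≤ C' * (ε / (C' * M' + 1)) * M' := by
        gcongr
    _ < ε := by
        have h1 : C' * (ε / (C' * M' + 1)) * M' = C' * M' * (ε / (C' * M' + 1)) := by ring
        rw [h1]
        calc C' * M' * (ε / (C' * M' + 1))
            < (C' * M' + 1) * (ε / (C' * M' + 1)) :=
              mul_lt_mul_of_pos_right (by linarith) (div_pos hε hden)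
          _ = ε := by field_simp
end
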